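/- arXiv:1210.3799 — 5 statements merged into one kernel-verified Lean document; each statement's English description precedes it below -/
import Mathlib

section
/- For every n ≥ 1, there exist nonnegative integers γ_{n,i} (for 1 ≤ i ≤ ⌈n/2⌉) such that A_n(t) = Σ_{i=1}^{⌈n/2⌉} γ_{n,i} · t^i · (1+t)^{n+1-2i}. -/
/-- Number of descents of a permutation of `Fin n`. -/
def des {n : ℕ} (π : Equiv.Perm (Fin n)) : ℕ :=
  (Finset.univ.filter fun i : Fin n => (i : ℕ) + 1 < n ∧ π (finRotate n i) < π i).card

/-- The Eulerian polynomial `A_n(t) = Σ_{π ∈ S_n} t^(des π + 1)`. -/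
noncomputable def eulerianPoly (n : ℕ) : Polynomial ℤ :=
  ∑ π : Equiv.Perm (Fin n), Polynomial.X ^ (des π + 1)

open Finset Polynomial

section Aux

/-- descent count of a word, positions `0..m-1`. -/
def Dw (m : ℕ) (w : ℕ → ℕ) : ℕ := ∑ i ∈ Finset.range m, (if w (i+1) < w i then 1 else 0)

/-- insert value `M` at position `j` of a word -/
def insW (w : ℕ → ℕ) (j M : ℕ) : ℕ → ℕ := fun i => if i < j then w i else if i = j then M else w (i-1)

/-- the word of a permutation -/
def wP {N : ℕ} (π : Equiv.Perm (Fin N)) : ℕ → ℕ := fun i => if h : i < N then (π ⟨i, h⟩ : ℕ) else 0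

/-- insert a new largest letter at position `j` -/
def insP {n : ℕ} (σ : Equiv.Perm (Fin n)) (j : Fin (n+1)) : Equiv.Perm (Fin (n+1)) :=
  (finSuccEquiv' j).trans ((Equiv.optionCongr σ).trans (finSuccEquiv' (Fin.last n)).symm)

lemma Dw_congr (m : ℕ) {w w' : ℕ → ℕ} (h : ∀ i ≤ m, w i = w' i) : Dw m w = Dw m w' := by
  unfold Dw
  refine Finset.sum_congr rfl fun i hi => ?_
  rw [Finset.mem_range] at hi
  rw [h i (le_of_lt hi), h (i+1) hi]

lemma insW_des (m j M : ℕ) (w : ℕ → ℕ) (hj : j ≤ m) (hM : ∀ i < m, w i < M) :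
    Dw m (insW w j M) = Dw (m-1) w + (if j = m ∨ (0 < j ∧ w j < w (j-1)) then 0 else 1) := by
  set w' := insW w j M with hw'
  have hwlt : ∀ i, i < j → w' i = w i := fun i hi => by simp [hw', insW, hi]
  have hwj : w' j = M := by simp [hw', insW]
  have hwgt : ∀ i, j < i → w' i = w (i-1) := fun i hi => by
    simp [hw', insW, Nat.not_lt.mpr (le_of_lt hi), Nat.ne_of_gt hi]
  rcases eq_or_lt_of_le hj with rfl | hjm
  · simp only [eq_self_iff_true, true_or, if_true, add_zero]
    rcases Nat.eq_zero_or_pos j with rfl | hm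
    · simp [Dw]
    obtain ⟨m', rfl⟩ : ∃ m', j = m' + 1 := ⟨j - 1, (Nat.succ_pred_eq_of_pos hm).symm⟩
    rw [Dw, Finset.sum_range_succ]
    have h1 : w' (m'+1) = M := hwj
    have h2 : w' m' = w m' := hwlt _ (Nat.lt_succ_self _)
    rw [h1, h2, if_neg (not_lt.mpr (le_of_lt (hM m' (Nat.lt_succ_self _)))), add_zero]
    simp only [Nat.add_sub_cancel]
    exact Dw_congr _ fun i hi => hwlt i (Nat.lt_succ_of_le hi)
  · set g : ℕ → ℕ := fun i => if w (i+1) < w i then 1 else 0 with hg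
    set f : ℕ → ℕ := fun i => if w' (i+1) < w' i then 1 else 0 with hf
    obtain ⟨d, rfl⟩ : ∃ d, m = j + d + 1 := ⟨m - j - 1, by omega⟩
    have hLHS : Dw (j+d+1) w' = (∑ i ∈ range j, f i) + (1 + ∑ i ∈ range d, g (j+i)) := by
      have e1 : j + d + 1 = j + (d+1) := by omega
      rw [Dw, ← hf, e1, Finset.sum_range_add f j (d+1), Finset.sum_range_succ' (fun i => f (j+i)) d]
      congr 1
      rw [add_comm]
      congr 1
      · have : f j = 1 := by
          rw [hf]
          simp only
          rw [hwj, hwgt (j+1) (Nat.lt_succ_self j), Nat.add_sub_cancel,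
            if_pos (hM j (by omega))]
        simpa using this
      · refine Finset.sum_congr rfl fun i _ => ?_
        rw [hf, hg]
        simp only
        rw [hwgt (j + (i+1)) (by omega), hwgt (j + (i+1) + 1) (by omega)]
        congr 2 <;> omega
    have hA : (∑ i ∈ range j, f i) + (if 0 < j ∧ w j < w (j-1) then 1 else 0)
        = ∑ i ∈ range j, g i := by
      rcases Nat.eq_zero_or_pos j with rfl | hj0
      · simp
      obtain ⟨j', rfl⟩ : ∃ j', j = j' + 1 := ⟨j - 1, by omega⟩
      rw [Finset.sum_range_succ f, Finset.sum_range_succ g]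
      have hfj' : f j' = 0 := by
        rw [hf]; simp only
        rw [hwj, hwlt j' (by omega), if_neg (not_lt.mpr (le_of_lt (hM j' (by omega))))]
      have h1 : ∑ i ∈ range j', f i = ∑ i ∈ range j', g i :=
        Finset.sum_congr rfl fun i hi => by
          rw [mem_range] at hi
          rw [hf, hg]; simp only
          rw [hwlt i (by omega), hwlt (i+1) (by omega)]
      have h2 : (if 0 < j' + 1 ∧ w (j'+1) < w (j'+1-1) then 1 else 0) = g j' := by
        rw [hg]; simp only [Nat.add_sub_cancel]
        simp [Nat.succ_pos]
      rw [h1, hfj', add_zero, h2]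
    have hRHS : Dw (j+d+1-1) w = (∑ i ∈ range j, g i) + ∑ i ∈ range d, g (j+i) := by
      have : j + d + 1 - 1 = j + d := rfl
      rw [this, Dw, ← hg, Finset.sum_range_add g j d]
    rw [hLHS, hRHS]
    by_cases hP : 0 < j ∧ w j < w (j-1)
    · rw [if_pos hP] at hA
      rw [if_pos (Or.inr hP)]
      omega
    · rw [if_neg hP] at hA
      rw [if_neg (by rintro (h | h) <;> [omega; exact hP h])]
      omega

lemma count_lemma (m : ℕ) (w : ℕ → ℕ) :
    (∑ j ∈ range (m+1), if j = m ∨ (0 < j ∧ w j < w (j-1)) then 1 else 0)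
      = Dw (m-1) w + 1 := by
  rw [Finset.sum_range_succ]
  rw [if_pos (Or.inl rfl)]
  congr 1
  have h1 : ∀ j ∈ range m, (if j = m ∨ (0 < j ∧ w j < w (j-1)) then 1 else 0)
      = (if (0 < j ∧ w j < w (j-1)) then 1 else 0) := by
    intro j hj
    rw [mem_range] at hj
    by_cases hP : 0 < j ∧ w j < w (j-1)
    · rw [if_pos (Or.inr hP), if_pos hP]
    · rw [if_neg (fun h => h.elim (by omega) hP), if_neg hP]
  rw [Finset.sum_congr rfl h1]
  rcases Nat.eq_zero_or_pos m with rfl | hm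
  · simp [Dw]
  obtain ⟨m', rfl⟩ : ∃ m', m = m' + 1 := ⟨m - 1, by omega⟩
  rw [Finset.sum_range_succ' _ m']
  simp only [Nat.add_sub_cancel, Nat.succ_pos, true_and, Nat.add_sub_cancel]
  rw [Dw]
  simp [Nat.add_sub_cancel]

lemma insP_at {n : ℕ} (σ : Equiv.Perm (Fin n)) (j : Fin (n+1)) : insP σ j j = Fin.last n := by
  simp [insP, finSuccEquiv'_at, finSuccEquiv'_symm_none]

lemma insP_succAbove {n : ℕ} (σ : Equiv.Perm (Fin n)) (j : Fin (n+1)) (a : Fin n) :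
    insP σ j (j.succAbove a) = (σ a).castSucc := by
  simp [insP, finSuccEquiv'_succAbove, finSuccEquiv'_symm_some, Fin.succAbove_last]

lemma des_eq_Dw {m : ℕ} (π : Equiv.Perm (Fin (m+1))) : des π = Dw m (wP π) := by
  rw [des, Dw, Finset.card_filter]
  rw [← Fin.sum_univ_eq_sum_range (fun i => if wP π (i+1) < wP π i then 1 else 0) m]
  rw [Fin.sum_univ_castSucc
    (f := fun i : Fin (m+1) => if (i : ℕ) + 1 < m + 1 ∧ π (finRotate (m+1) i) < π i then 1 else 0)]
  have hlast : (if ((Fin.last m : Fin (m+1)) : ℕ) + 1 < m + 1 ∧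
      π (finRotate (m+1) (Fin.last m)) < π (Fin.last m) then 1 else 0) = 0 := by
    simp [Fin.last]
  rw [hlast, add_zero]
  refine Finset.sum_congr rfl fun i _ => ?_
  have h1 : (Fin.castSucc i) < Fin.last m := Fin.castSucc_lt_last i
  have h2 : finRotate (m+1) (⟨(i:ℕ), by omega⟩ : Fin (m+1)) = (⟨(i:ℕ)+1, by omega⟩ : Fin (m+1)) := by
    rw [finRotate_succ_apply]
    exact Fin.ext (Fin.val_add_one_of_lt h1)
  have h3 : (Fin.castSucc i) = (⟨(i:ℕ), by omega⟩ : Fin (m+1)) := rfl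
  have hw1 : wP π ((i:ℕ)+1) = ((π ⟨(i:ℕ)+1, by omega⟩ : Fin (m+1)) : ℕ) :=
    dif_pos (show (i:ℕ)+1 < m+1 by omega)
  have hw2 : wP π (i:ℕ) = ((π ⟨(i:ℕ), by omega⟩ : Fin (m+1)) : ℕ) :=
    dif_pos (show (i:ℕ) < m+1 by omega)
  refine if_congr ?_ rfl rfl
  simp only [hw1, hw2, h3, h2, Fin.lt_def]
  exact ⟨fun h => h.2, fun h => ⟨by simpa using i.isLt, h⟩⟩

lemma wP_insP {n : ℕ} (σ : Equiv.Perm (Fin n)) (j : Fin (n+1)) :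
    ∀ i ≤ n, wP (insP σ j) i = insW (wP σ) (j:ℕ) n i := by
  intro i hi
  have hiN : i < n + 1 := by omega
  have hj : (j:ℕ) ≤ n := by omega
  rcases lt_trichotomy i (j:ℕ) with h | h | h
  · have hin : i < n := by omega
    have ha : (⟨i, hiN⟩ : Fin (n+1)) = j.succAbove ⟨i, hin⟩ := by
      rw [Fin.succAbove_of_castSucc_lt _ _ (by simpa [Fin.lt_def] using h)]
      rfl
    rw [wP, insW]
    rw [dif_pos hiN, if_pos h, ha, insP_succAbove]
    rw [wP, dif_pos hin]
    rfl
  · rw [wP, insW]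
    rw [dif_pos hiN, if_neg (by omega), if_pos h]
    have : (⟨i, hiN⟩ : Fin (n+1)) = j := Fin.ext (by simp [h])
    rw [this, insP_at]
    rfl
  · have hin : i - 1 < n := by omega
    have ha : (⟨i, hiN⟩ : Fin (n+1)) = j.succAbove ⟨i-1, hin⟩ := by
      rw [Fin.succAbove_of_le_castSucc _ _ (by simp [Fin.le_def]; omega)]
      exact Fin.ext (by simp [Fin.val_succ]; omega)
    rw [wP, insW]
    rw [dif_pos hiN, if_neg (by omega), if_neg (by omega), ha, insP_succAbove]
    rw [wP, dif_pos hin]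
    rfl

lemma wP_lt {n : ℕ} (σ : Equiv.Perm (Fin n)) : ∀ i < n, wP σ i < n := by
  intro i hi
  rw [wP, dif_pos hi]
  exact (σ _).isLt

lemma des_insP {m : ℕ} (σ : Equiv.Perm (Fin (m+1))) (j : Fin (m+2)) :
    des (insP σ j) = des σ +
      (if (j:ℕ) = m+1 ∨ (0 < (j:ℕ) ∧ wP σ (j:ℕ) < wP σ ((j:ℕ)-1)) then 0 else 1) := by
  rw [des_eq_Dw, des_eq_Dw]
  rw [Dw_congr (m+1) (wP_insP σ j)]
  rw [insW_des (m+1) (j:ℕ) (m+1) (wP σ) (by omega) (wP_lt σ)]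
  rfl

lemma count_insP {m : ℕ} (σ : Equiv.Perm (Fin (m+1))) :
    (Finset.univ.filter fun j : Fin (m+2) =>
        (j:ℕ) = m+1 ∨ (0 < (j:ℕ) ∧ wP σ (j:ℕ) < wP σ ((j:ℕ)-1))).card = des σ + 1 := by
  rw [Finset.card_filter]
  rw [Fin.sum_univ_eq_sum_range
    (fun j => if j = m+1 ∨ (0 < j ∧ wP σ j < wP σ (j-1)) then 1 else 0) (m+2)]
  rw [count_lemma (m+1) (wP σ), des_eq_Dw]
  rfl

lemma insP_bijective (m : ℕ) :
    Function.Bijective (fun p : Equiv.Perm (Fin (m+1)) × Fin (m+2) => insP p.1 p.2) := by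
  rw [Fintype.bijective_iff_injective_and_card]
  constructor
  · rintro ⟨σ, j⟩ ⟨σ', j'⟩ h
    simp only at h
    have hjj : j = j' := by
      by_contra hne
      obtain ⟨a, ha⟩ := Fin.exists_succAbove_eq hne
      have h1 : insP σ j j = Fin.last (m+1) := insP_at σ j
      have h2 : insP σ' j' j = (σ' a).castSucc := by rw [← ha, insP_succAbove]
      rw [h, h2] at h1
      exact absurd h1 (Fin.ne_of_lt (Fin.castSucc_lt_last _))
    subst hjj
    have hσ : σ = σ' := by
      ext a
      have := congrArg (fun π => π (j.succAbove a)) h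
      simp only [insP_succAbove] at this
      have := Fin.castSucc_injective _ this
      exact congrArg Fin.val this
    rw [hσ]
  · simp [Fintype.card_perm, Fintype.card_fin, Nat.factorial_succ]
    ring

lemma Dw_le (m : ℕ) (w : ℕ → ℕ) : Dw m w ≤ m := by
  rw [Dw]
  calc ∑ i ∈ Finset.range m, (if w (i+1) < w i then 1 else 0)
      ≤ ∑ i ∈ Finset.range m, 1 := Finset.sum_le_sum (fun i _ => by split <;> omega)
    _ = m := by simp

lemma des_le {m : ℕ} (σ : Equiv.Perm (Fin (m+1))) : des σ ≤ m := by
  rw [des_eq_Dw]; exact Dw_le m _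

lemma sum_over_j {m : ℕ} (σ : Equiv.Perm (Fin (m+1))) :
    ∑ j : Fin (m+2), (X : Polynomial ℤ)^(des (insP σ j) + 1)
      = C ((des σ + 1 : ℕ) : ℤ) * X^(des σ + 1) + C ((m + 1 - des σ : ℕ) : ℤ) * X^(des σ + 2) := by
  have h1 : ∀ j : Fin (m+2), (X : Polynomial ℤ)^(des (insP σ j) + 1)
      = if (j:ℕ) = m+1 ∨ (0 < (j:ℕ) ∧ wP σ (j:ℕ) < wP σ ((j:ℕ)-1)) then X^(des σ + 1)
        else X^(des σ + 2) := by
    intro j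
    rw [des_insP σ j]
    split
    · rw [add_zero]
    · rfl
  rw [Finset.sum_congr rfl (fun j _ => h1 j), Finset.sum_ite, Finset.sum_const, Finset.sum_const]
  rw [count_insP]
  have hcard : (Finset.univ.filter fun j : Fin (m+2) =>
      ¬((j:ℕ) = m+1 ∨ (0 < (j:ℕ) ∧ wP σ (j:ℕ) < wP σ ((j:ℕ)-1)))).card = m + 1 - des σ := by
    have := Finset.card_filter_add_card_filter_not (s := (Finset.univ : Finset (Fin (m+2))))
      (p := fun j : Fin (m+2) => (j:ℕ) = m+1 ∨ (0 < (j:ℕ) ∧ wP σ (j:ℕ) < wP σ ((j:ℕ)-1)))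
    rw [count_insP] at this
    simp only [Finset.card_univ, Fintype.card_fin] at this
    have hd : des σ ≤ m := des_le σ
    omega
  rw [hcard]
  simp [nsmul_eq_mul]

lemma euler_rec (m : ℕ) :
    eulerianPoly (m+2) = (X - X^2) * derivative (eulerianPoly (m+1))
      + C ((m+2 : ℕ) : ℤ) * (X * eulerianPoly (m+1)) := by
  have hb := Fintype.sum_bijective _ (insP_bijective m)
    (fun p : Equiv.Perm (Fin (m+1)) × Fin (m+2) => (X : Polynomial ℤ)^(des (insP p.1 p.2) + 1))
    (fun π : Equiv.Perm (Fin (m+2)) => (X : Polynomial ℤ)^(des π + 1))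
    (fun p => rfl)
  rw [eulerianPoly, ← hb, Fintype.sum_prod_type]
  rw [Finset.sum_congr rfl (fun σ _ => sum_over_j σ)]
  rw [eulerianPoly, derivative_sum, Finset.mul_sum, Finset.mul_sum, Finset.mul_sum,
    ← Finset.sum_add_distrib]
  refine Finset.sum_congr rfl fun σ _ => ?_
  have hd : des σ ≤ m := des_le σ
  rw [derivative_X_pow]
  push_cast [Nat.cast_sub (by omega : des σ ≤ m + 1)]
  simp only [map_add, map_sub, map_one, map_natCast, map_ofNat]
  ring

lemma key (n i : ℕ) (hi : 1 ≤ i) (h2 : 2*i ≤ n+1) :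
    (X - X^2) * derivative ((X : Polynomial ℤ)^i * (1+X)^(n+1-2*i))
      + C ((n+1:ℕ):ℤ) * (X * (X^i * (1+X)^(n+1-2*i)))
    = C ((i:ℕ):ℤ) * (X^i * (1+X)^(n+2-2*i))
      + C ((2*(n+1-2*i) : ℕ) : ℤ) * (X^(i+1) * (1+X)^(n-2*i)) := by
  obtain ⟨i', rfl⟩ : ∃ i', i = i' + 1 := ⟨i - 1, by omega⟩
  rcases eq_or_lt_of_le h2 with he | hlt
  · have e1 : n+1-2*(i'+1) = 0 := by omega
    have e2 : n+2-2*(i'+1) = 1 := by omega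
    have e3 : n-2*(i'+1) = 0 := by omega
    have e4 : n+1 = 2*(i'+1) := by omega
    rw [e1, e2, e3, e4]
    rw [pow_zero, mul_one, derivative_X_pow]
    simp only [C_eq_natCast]
    push_cast
    ring
  · obtain ⟨m', hm⟩ : ∃ m', n+1-2*(i'+1) = m'+1 := ⟨n-2*(i'+1), by omega⟩
    have e2 : n+2-2*(i'+1) = m'+2 := by omega
    have e3 : n-2*(i'+1) = m' := by omega
    have e4 : n+1 = 2*(i'+1)+m'+1 := by omega
    rw [hm, e2, e3, e4]
    rw [derivative_mul, derivative_X_pow, derivative_pow]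
    rw [show derivative (1 + X : Polynomial ℤ) = 1 by simp]
    simp only [C_eq_natCast]
    push_cast
    ring

lemma main_ind (n : ℕ) (hn : 1 ≤ n) : ∃ γ : ℕ → ℕ,
    (∀ k, γ k ≠ 0 → 1 ≤ k ∧ 2*k ≤ n+1) ∧
    eulerianPoly n
      = ∑ i ∈ Finset.range (n+3), (γ i : Polynomial ℤ) * X^i * (1+X)^(n+1-2*i) := by
  induction n, hn using Nat.le_induction with
  | base =>
    refine ⟨fun k => if k = 1 then 1 else 0, fun k hk => ?_, ?_⟩
    · by_cases h : k = 1
      · subst h; omega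
      · exfalso; simp [h] at hk
    have h1 : eulerianPoly 1 = X := by
      rw [eulerianPoly]
      rw [Finset.univ_unique, Finset.sum_singleton]
      have : des (default : Equiv.Perm (Fin 1)) = 0 := by
        rw [des]
        rw [Finset.card_eq_zero, Finset.filter_eq_empty_iff]
        intro i _
        simp only [not_and]
        intro h
        omega
      rw [this, pow_one]
    rw [h1]
    rw [show (1+3 : ℕ) = 4 from rfl]
    rw [Finset.sum_range_succ, Finset.sum_range_succ, Finset.sum_range_succ, Finset.sum_range_succ]
    norm_num
  | succ n hn ih =>
    obtain ⟨γ, hsupp, hEq⟩ := ih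
    have hγ0 : γ 0 = 0 := by
      by_contra h
      exact absurd (hsupp 0 h).1 (by omega)
    refine ⟨fun j => j * γ j + 2 * ((n+3) - 2*j) * γ (j-1), fun j hj => ?_, ?_⟩
    · -- support
      have hj' : j * γ j + 2 * ((n+3) - 2*j) * γ (j-1) ≠ 0 := hj
      rcases Nat.eq_zero_or_pos (γ j) with hz | hp
      · have h5 : γ (j-1) ≠ 0 := fun h => by simp [hz, h] at hj'
        have h6 : (n+3) - 2*j ≠ 0 := fun h => by simp [hz, h] at hj'
        obtain ⟨ha, hb⟩ := hsupp _ h5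
        omega
      · obtain ⟨ha, hb⟩ := hsupp j (by omega)
        have hj1 : 1 ≤ j := ha
        omega
    · -- equation
      obtain ⟨m, rfl⟩ : ∃ m, n = m + 1 := ⟨n - 1, by omega⟩
      set N := m + 1 with hN
      have per_i : ∀ i ∈ Finset.range (N+3),
          (X - X^2) * derivative ((γ i : Polynomial ℤ) * X^i * (1+X)^(N+1-2*i))
            + C ((N+1:ℕ):ℤ) * (X * ((γ i : Polynomial ℤ) * X^i * (1+X)^(N+1-2*i)))
          = ((i * γ i : ℕ) : Polynomial ℤ) * X^i * (1+X)^(N+2-2*i)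
            + ((2*(N+1-2*i)*γ i : ℕ) : Polynomial ℤ) * X^(i+1) * (1+X)^(N-2*i) := by
        intro i _
        by_cases hγ : γ i = 0
        · simp [hγ]
        · obtain ⟨h1i, h2i⟩ := hsupp i hγ
          have hk := key N i h1i h2i
          have e : ((γ i : ℕ) : Polynomial ℤ) * X^i * (1+X)^(N+1-2*i)
              = C ((γ i : ℕ) : ℤ) * (X^i * (1+X)^(N+1-2*i)) := by
            rw [C_eq_natCast, mul_assoc]
          rw [e, derivative_C_mul]
          calc (X - X^2) * (C ((γ i:ℕ):ℤ) * derivative (X^i * (1+X)^(N+1-2*i)))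
                + C ((N+1:ℕ):ℤ) * (X * (C ((γ i:ℕ):ℤ) * (X^i * (1+X)^(N+1-2*i))))
              = C ((γ i:ℕ):ℤ) * ((X - X^2) * derivative (X^i * (1+X)^(N+1-2*i))
                + C ((N+1:ℕ):ℤ) * (X * (X^i * (1+X)^(N+1-2*i)))) := by ring
            _ = C ((γ i:ℕ):ℤ) * (C ((i:ℕ):ℤ) * (X^i * (1+X)^(N+2-2*i))
                + C ((2*(N+1-2*i) : ℕ) : ℤ) * (X^(i+1) * (1+X)^(N-2*i))) := by rw [hk]
            _ = _ := by
                simp only [C_eq_natCast]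
                push_cast
                ring
      have hrec : eulerianPoly (N+1) = (X - X^2) * derivative (eulerianPoly N)
          + C ((N+1:ℕ):ℤ) * (X * eulerianPoly N) := by
        have := euler_rec m
        rw [hN]
        convert this using 3 <;> push_cast <;> ring_nf
      rw [hrec, hEq, derivative_sum, Finset.mul_sum, Finset.mul_sum, Finset.mul_sum,
        ← Finset.sum_add_distrib]
      rw [Finset.sum_congr rfl per_i]
      rw [Finset.sum_add_distrib]
      -- now reorganize RHS target
      have hT : ∑ j ∈ Finset.range (N+1+3),
          ((j * γ j + 2 * ((N+3) - 2*j) * γ (j-1) : ℕ) : Polynomial ℤ) * X^j * (1+X)^(N+2-2*j)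
          = (∑ i ∈ Finset.range (N+3), ((i * γ i : ℕ) : Polynomial ℤ) * X^i * (1+X)^(N+2-2*i))
          + ∑ i ∈ Finset.range (N+3), ((2*(N+1-2*i)*γ i : ℕ) : Polynomial ℤ) * X^(i+1) * (1+X)^(N-2*i) := by
        have split : ∀ j, ((j * γ j + 2 * ((N+3) - 2*j) * γ (j-1) : ℕ) : Polynomial ℤ) * X^j * (1+X)^(N+2-2*j)
            = ((j * γ j : ℕ) : Polynomial ℤ) * X^j * (1+X)^(N+2-2*j)
              + ((2 * ((N+3) - 2*j) * γ (j-1) : ℕ) : Polynomial ℤ) * X^j * (1+X)^(N+2-2*j) := by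
          intro j; push_cast; ring
        rw [Finset.sum_congr rfl (fun j _ => split j), Finset.sum_add_distrib]
        congr 1
        · -- first sums: extend range by one zero term
          rw [show N+1+3 = (N+3)+1 from rfl, Finset.sum_range_succ]
          have hz : γ (N+3) = 0 := by
            by_contra h
            have := (hsupp _ h).2
            omega
          rw [hz]
          norm_num
        · -- second: shift index
          rw [show N+1+3 = (N+3)+1 from rfl, Finset.sum_range_succ' _ (N+3)]
          have hz0 : ((2 * ((N+3) - 2*0) * γ (0-1) : ℕ) : Polynomial ℤ) * X^0 * (1+X)^(N+2-2*0) = 0 := by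
            norm_num [hγ0]
          rw [hz0, add_zero]
          refine Finset.sum_congr rfl fun i _ => ?_
          have e1 : (N+3) - 2*(i+1) = N+1-2*i := by omega
          have e2 : N+2-2*(i+1) = N-2*i := by omega
          have e3 : (i+1) - 1 = i := by omega
          rw [e1, e2, e3]
      rw [hT]

end Aux

/-- γ-nonnegativity of the Eulerian polynomials (Foata–Schützenberger).
Here `⌈n/2⌉ = (n+1)/2` in natural-number arithmetic. -/
theorem stmt_2 :
    ∀ n : ℕ, 1 ≤ n → ∃ γ : ℕ → ℕ,
      eulerianPoly n =
        ∑ i ∈ Finset.Icc 1 ((n + 1) / 2),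
          (γ i : Polynomial ℤ) * Polynomial.X ^ i * (1 + Polynomial.X) ^ (n + 1 - 2 * i) := by
  intro n hn
  obtain ⟨γ, hsupp, hEq⟩ := main_ind n hn
  refine ⟨γ, ?_⟩
  rw [hEq]
  refine (Finset.sum_subset ?_ ?_).symm
  · intro i hi
    rw [Finset.mem_Icc] at hi
    rw [Finset.mem_range]
    have := Nat.div_le_self (n+1) 2
    omega
  · intro i _ hi
    rw [Finset.mem_Icc] at hi
    have hz : γ i = 0 := by
      by_contra h
      obtain ⟨h1, h2⟩ := hsupp i h
      have : i ≤ (n+1)/2 := Nat.le_div_iff_mul_le (by omega) |>.mpr (by omega)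
      exact hi ⟨h1, this⟩
    rw [hz]
    simp
end

section
/- The coefficients in the γ-expansion of the Eulerian polynomials satisfy the recurrence γ_{n+1,i} = i·γ_{n,i} + 2(n+3-2i)·γ_{n,i-1}, with γ_{1,1} = 1 and γ_{1,i} = 0 for i ≠ 1. -/
open Finset Polynomial Equiv

set_option maxHeartbeats 1000000

namespace StmtAux

variable {m : ℕ}

/-- The word of `σ` with value `last` inserted at position `p`. -/
def insFun (σ : Equiv.Perm (Fin (m+1))) (p : Fin (m+2)) : Fin (m+2) → Fin (m+2) :=
  p.insertNth (Fin.last (m+1)) (fun j => (σ j).castSucc)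

lemma insFun_succAbove (σ : Equiv.Perm (Fin (m+1))) (p : Fin (m+2)) (a : Fin (m+1)) :
    insFun σ p (p.succAbove a) = (σ a).castSucc :=
  Fin.insertNth_apply_succAbove p _ _ a

lemma insFun_same (σ : Equiv.Perm (Fin (m+1))) (p : Fin (m+2)) :
    insFun σ p p = Fin.last (m+1) :=
  Fin.insertNth_apply_same p _ _

lemma insFun_inj (σ : Equiv.Perm (Fin (m+1))) (p : Fin (m+2)) :
    Function.Injective (insFun σ p) := by
  intro x y hxy
  rcases eq_or_ne p x with rfl | hx
  · rcases eq_or_ne p y with rfl | hy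
    · rfl
    · obtain ⟨b, rfl⟩ := Fin.exists_succAbove_eq hy.symm
      rw [insFun_same, insFun_succAbove] at hxy
      exact absurd hxy.symm (Fin.castSucc_lt_last _).ne
  · obtain ⟨a, rfl⟩ := Fin.exists_succAbove_eq hx.symm
    rcases eq_or_ne p y with rfl | hy
    · rw [insFun_same, insFun_succAbove] at hxy
      exact absurd hxy (Fin.castSucc_lt_last _).ne
    · obtain ⟨b, rfl⟩ := Fin.exists_succAbove_eq hy.symm
      rw [insFun_succAbove, insFun_succAbove] at hxy
      rw [σ.injective (Fin.castSucc_injective _ hxy)]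

/-- The insertion permutation. -/
noncomputable def ins (σ : Equiv.Perm (Fin (m+1))) (p : Fin (m+2)) : Equiv.Perm (Fin (m+2)) :=
  Equiv.ofBijective _ (Finite.injective_iff_bijective.mp (insFun_inj σ p))

lemma ins_apply (σ : Equiv.Perm (Fin (m+1))) (p : Fin (m+2)) (x : Fin (m+2)) :
    ins σ p x = insFun σ p x := rfl

lemma ins_injective :
    Function.Injective (fun x : Equiv.Perm (Fin (m+1)) × Fin (m+2) => ins x.1 x.2) := by
  rintro ⟨σ₁, p₁⟩ ⟨σ₂, p₂⟩ h
  simp only at h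
  have happ : ∀ x, insFun σ₁ p₁ x = insFun σ₂ p₂ x := fun x => by
    rw [← ins_apply, ← ins_apply, h]
  have hp : p₁ = p₂ := by
    by_contra hne
    obtain ⟨b, hb⟩ := Fin.exists_succAbove_eq hne
    have := happ p₁
    rw [insFun_same] at this
    rw [← hb, insFun_succAbove] at this
    exact absurd this.symm (Fin.castSucc_lt_last _).ne
  subst hp
  have hσ : σ₁ = σ₂ := by
    ext a
    have := happ (p₁.succAbove a)
    rw [insFun_succAbove, insFun_succAbove] at this
    exact congrArg Fin.val (Fin.castSucc_injective _ this)
  simp [hσ]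

lemma ins_bijective :
    Function.Bijective (fun x : Equiv.Perm (Fin (m+1)) × Fin (m+2) => ins x.1 x.2) := by
  rw [Fintype.bijective_iff_injective_and_card]
  refine ⟨ins_injective, ?_⟩
  simp only [Fintype.card_prod, Fintype.card_perm, Fintype.card_fin, Nat.factorial_succ]
  ring


def Dset (σ : Equiv.Perm (Fin (m+1))) : Finset (Fin m) :=
  Finset.univ.filter fun i : Fin m => σ i.succ < σ i.castSucc

lemma des_eq (π : Equiv.Perm (Fin (m+1))) : des π = (Dset π).card := by
  unfold des Dset
  rw [Finset.card_filter, Finset.card_filter, Fin.sum_univ_castSucc]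
  have hlast : (if ((Fin.last m : ℕ) + 1 < m + 1 ∧
      π (finRotate (m+1) (Fin.last m)) < π (Fin.last m)) then 1 else 0) = 0 := by
    simp [Fin.val_last]
  rw [hlast, add_zero]
  refine Finset.sum_congr rfl fun i _ => ?_
  have h1 : ((i.castSucc : Fin (m+1)) : ℕ) + 1 < m + 1 := by
    simp
  have h2 : finRotate (m+1) i.castSucc = i.succ := by
    rw [finRotate_succ_apply, Fin.coeSucc_eq_succ]
  rw [h2]
  simp [h1]

lemma ins_val_lt (σ : Equiv.Perm (Fin (m+1))) (p : Fin (m+2)) (x : Fin (m+1))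
    (h : (x : ℕ) < (p : ℕ)) : ins σ p x.castSucc = (σ x).castSucc := by
  rw [ins_apply, ← Fin.succAbove_of_castSucc_lt p x h, insFun_succAbove]

lemma ins_val_gt (σ : Equiv.Perm (Fin (m+1))) (p : Fin (m+2)) (x : Fin (m+1))
    (h : (p : ℕ) ≤ (x : ℕ)) : ins σ p x.succ = (σ x).castSucc := by
  rw [ins_apply, ← Fin.succAbove_of_le_castSucc p x h, insFun_succAbove]

lemma ins_val_eq (σ : Equiv.Perm (Fin (m+1))) (p : Fin (m+2)) :
    ins σ p p = Fin.last (m+1) := insFun_same σ p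

def psi (p : Fin (m+2)) (i : Fin m) : Fin (m+1) :=
  if (i : ℕ) + 1 < (p : ℕ) then i.castSucc else i.succ

lemma psi_injective (p : Fin (m+2)) : Function.Injective (psi p) := by
  intro a b hab
  unfold psi at hab
  have hav := congrArg Fin.val hab
  split_ifs at hav <;> simp [Fin.val_succ] at hav <;> (apply Fin.ext; omega)

lemma Dset_ins (σ : Equiv.Perm (Fin (m+1))) (p : Fin (m+2)) :
    Dset (ins σ p) = (Dset σ).image (psi p) ∪
      (Finset.univ.filter fun j : Fin (m+1) => (j : ℕ) = (p : ℕ)) := by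
  ext j
  simp only [Dset, Finset.mem_filter, Finset.mem_univ, true_and, Finset.mem_union,
    Finset.mem_image]
  constructor
  · intro h
    rcases lt_trichotomy ((j : ℕ) + 1) (p : ℕ) with hlt | heq | hgt
    · left
      have hjm : (j : ℕ) < m := by omega
      have e1 : ins σ p j.castSucc = (σ j).castSucc := ins_val_lt σ p j (by omega)
      have e2 : (j.succ : Fin (m+2)) = (⟨(j : ℕ) + 1, by omega⟩ : Fin (m+1)).castSucc := by
        simp only [Fin.ext_iff, Fin.val_succ, Fin.coe_castSucc, Fin.val_mk, Fin.val_last] <;> omega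
      have e3 : ins σ p j.succ = (σ ⟨(j : ℕ) + 1, by omega⟩).castSucc := by
        rw [e2]; exact ins_val_lt σ p _ (by simpa using hlt)
      rw [e1, e3, Fin.castSucc_lt_castSucc_iff] at h
      refine ⟨⟨(j : ℕ), hjm⟩, ?_, ?_⟩
      · skip
        have hs : (⟨(j : ℕ), hjm⟩ : Fin m).succ = ⟨(j : ℕ) + 1, by omega⟩ := by
          simp only [Fin.ext_iff, Fin.val_succ, Fin.coe_castSucc, Fin.val_mk, Fin.val_last] <;> omega
        have hc : (⟨(j : ℕ), hjm⟩ : Fin m).castSucc = j := by simp only [Fin.ext_iff, Fin.val_succ, Fin.coe_castSucc, Fin.val_mk, Fin.val_last] <;> omega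
        simp only [hs, hc]; exact h
      · unfold psi
        rw [if_pos (by simpa using hlt)]
        simp only [Fin.ext_iff, Fin.val_succ, Fin.coe_castSucc, Fin.val_mk, Fin.val_last] <;> omega
    · exfalso
      have e2 : (j.succ : Fin (m+2)) = p := by apply Fin.ext; simpa using heq
      rw [e2, ins_val_eq] at h
      exact absurd h (not_lt.mpr (Fin.le_last _))
    · rcases eq_or_lt_of_le (Nat.lt_succ_iff.mp hgt) with heq2 | hgt2
      · right; exact heq2.symm
      · left
        have hj1 : 1 ≤ (j : ℕ) := by omega
        have hjm : (j : ℕ) - 1 < m := by omega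
        have e1 : ins σ p j.succ = (σ j).castSucc := ins_val_gt σ p j (by omega)
        have e2 : (j.castSucc : Fin (m+2)) = (⟨(j : ℕ) - 1, by omega⟩ : Fin (m+1)).succ := by
          apply Fin.ext; simp [Fin.val_succ]; omega
        have e3 : ins σ p j.castSucc = (σ ⟨(j : ℕ) - 1, by omega⟩).castSucc := by
          rw [e2]; exact ins_val_gt σ p _ (by simp; omega)
        rw [e1, e3, Fin.castSucc_lt_castSucc_iff] at h
        refine ⟨⟨(j : ℕ) - 1, hjm⟩, ?_, ?_⟩
        · skip
          have hs : (⟨(j : ℕ) - 1, hjm⟩ : Fin m).succ = j := by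
            apply Fin.ext; simp [Fin.val_succ]; omega
          have hc : (⟨(j : ℕ) - 1, hjm⟩ : Fin m).castSucc = ⟨(j : ℕ) - 1, by omega⟩ := by
            simp only [Fin.ext_iff, Fin.val_succ, Fin.coe_castSucc, Fin.val_mk, Fin.val_last] <;> omega
          simp only [hs, hc]; exact h
        · unfold psi
          rw [if_neg (by simp; omega)]
          apply Fin.ext; simp [Fin.val_succ]; omega
  · intro h
    rcases h with ⟨i, hi, rfl⟩ | hjp
    · skip
      unfold psi
      split_ifs with hcase
      · have e1 : ins σ p (i.castSucc.castSucc) = (σ i.castSucc).castSucc :=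
          ins_val_lt σ p i.castSucc (by simp; omega)
        have e2 : (i.castSucc.succ : Fin (m+2)) = (i.succ : Fin (m+1)).castSucc := by
          simp only [Fin.ext_iff, Fin.val_succ, Fin.coe_castSucc, Fin.val_mk, Fin.val_last] <;> omega
        have e3 : ins σ p (i.castSucc.succ) = (σ i.succ).castSucc := by
          rw [e2]; exact ins_val_lt σ p i.succ (by simp [Fin.val_succ]; omega)
        rw [e1, e3, Fin.castSucc_lt_castSucc_iff]
        exact hi
      · push_neg at hcase
        have e1 : ins σ p (i.succ.succ) = (σ i.succ).castSucc :=
          ins_val_gt σ p i.succ (by simp [Fin.val_succ]; omega)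
        rcases eq_or_lt_of_le hcase with heq | hlt2
        · have e2 : (i.succ.castSucc : Fin (m+2)) = p := by
            apply Fin.ext; simp [Fin.val_succ]; omega
          rw [e1, e2, ins_val_eq]
          exact Fin.castSucc_lt_last _
        · have e2 : (i.succ.castSucc : Fin (m+2)) = (i.castSucc : Fin (m+1)).succ := by
            simp only [Fin.ext_iff, Fin.val_succ, Fin.coe_castSucc, Fin.val_mk, Fin.val_last] <;> omega
          have e3 : ins σ p (i.succ.castSucc) = (σ i.castSucc).castSucc := by
            rw [e2]; exact ins_val_gt σ p i.castSucc (by simp; omega)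
          rw [e1, e3, Fin.castSucc_lt_castSucc_iff]
          exact hi
    · have e2 : (j.castSucc : Fin (m+2)) = p := by apply Fin.ext; simpa using hjp
      have e1 : ins σ p j.succ = (σ j).castSucc := ins_val_gt σ p j (by omega)
      rw [e1, e2, ins_val_eq]
      exact Fin.castSucc_lt_last _

def Goodp (σ : Equiv.Perm (Fin (m+1))) (p : Fin (m+2)) : Prop :=
  p = Fin.last (m+1) ∨ ∃ i ∈ Dset σ, (p : ℕ) = (i : ℕ) + 1

instance (σ : Equiv.Perm (Fin (m+1))) (p : Fin (m+2)) : Decidable (Goodp σ p) := by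
  unfold Goodp; infer_instance

lemma des_le (σ : Equiv.Perm (Fin (m+1))) : des σ ≤ m := by
  rw [des_eq]
  exact le_trans (Finset.card_le_card (Finset.filter_subset _ _)) (by simp)

lemma des_ins (σ : Equiv.Perm (Fin (m+1))) (p : Fin (m+2)) :
    des (ins σ p) = des σ + (if Goodp σ p then 0 else 1) := by
  rw [des_eq, des_eq, Dset_ins]
  by_cases hg : Goodp σ p
  · rw [if_pos hg, add_zero]
    rcases hg with hlast | ⟨i₀, hi₀, hp⟩
    · have hfil : (Finset.univ.filter fun j : Fin (m+1) => (j : ℕ) = (p : ℕ)) = ∅ := by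
        ext j
        subst hlast
        simp [Fin.val_last]
        omega
      rw [hfil, Finset.union_empty, Finset.card_image_of_injective _ (psi_injective p)]
    · have hsub : (Finset.univ.filter fun j : Fin (m+1) => (j : ℕ) = (p : ℕ)) ⊆
          (Dset σ).image (psi p) := by
        intro j hj
        simp only [Finset.mem_filter, Finset.mem_univ, true_and] at hj
        refine Finset.mem_image.mpr ⟨i₀, hi₀, ?_⟩
        unfold psi
        rw [if_neg (by omega)]
        simp only [Fin.ext_iff, Fin.val_succ]
        omega
      rw [Finset.union_eq_left.mpr hsub, Finset.card_image_of_injective _ (psi_injective p)]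
  · rw [if_neg hg]
    unfold Goodp at hg
    push_neg at hg
    obtain ⟨hlast, hnd⟩ := hg
    have hpm : (p : ℕ) < m + 1 := by
      rcases lt_or_eq_of_le (Nat.lt_succ_iff.mp p.isLt) with h | h
      · omega
      · exact absurd (Fin.ext h) hlast
    have hfil : (Finset.univ.filter fun j : Fin (m+1) => (j : ℕ) = (p : ℕ)) =
        {(⟨(p : ℕ), hpm⟩ : Fin (m+1))} := by
      ext j
      simp only [Finset.mem_filter, Finset.mem_univ, true_and, Finset.mem_singleton,
        Fin.ext_iff, Fin.val_mk]
    have hdisj : Disjoint ((Dset σ).image (psi p))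
        {(⟨(p : ℕ), hpm⟩ : Fin (m+1))} := by
      rw [Finset.disjoint_singleton_right]
      intro hmem
      obtain ⟨i, hi, hpsi⟩ := Finset.mem_image.mp hmem
      have hval := congrArg Fin.val hpsi
      unfold psi at hval
      split_ifs at hval <;> simp only [Fin.coe_castSucc, Fin.val_succ, Fin.val_mk] at hval
      · omega
      · exact hnd i hi hval.symm
    rw [hfil, Finset.card_union_of_disjoint hdisj,
      Finset.card_image_of_injective _ (psi_injective p), Finset.card_singleton]

def GoodSet (σ : Equiv.Perm (Fin (m+1))) : Finset (Fin (m+2)) :=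
  Finset.univ.filter fun p => Goodp σ p

lemma card_GoodSet (σ : Equiv.Perm (Fin (m+1))) : (GoodSet σ).card = des σ + 1 := by
  have him : GoodSet σ = insert (Fin.last (m+1))
      ((Dset σ).image fun i : Fin m => (i.succ.castSucc : Fin (m+2))) := by
    ext p
    simp only [GoodSet, Finset.mem_filter]
    simp only [GoodSet, Goodp, Finset.mem_filter, Finset.mem_univ, true_and,
      Finset.mem_insert, Finset.mem_image]
    constructor
    · rintro (h | ⟨i, hi, hp⟩)
      · exact Or.inl h
      · refine Or.inr ⟨i, hi, ?_⟩
        simp only [Fin.ext_iff, Fin.coe_castSucc, Fin.val_succ]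
        omega
    · rintro (h | ⟨i, hi, rfl⟩)
      · exact Or.inl h
      · refine Or.inr ⟨i, hi, ?_⟩
        simp
  rw [him, Finset.card_insert_of_notMem, Finset.card_image_of_injective, des_eq]
  · intro a b hab
    have := congrArg Fin.val hab
    simp only [Fin.coe_castSucc, Fin.val_succ] at this
    exact Fin.ext (by omega)
  · intro hmem
    obtain ⟨i, _, hi⟩ := Finset.mem_image.mp hmem
    have := congrArg Fin.val hi
    simp only [Fin.coe_castSucc, Fin.val_succ, Fin.val_last] at this
    omega

lemma sum_ins (σ : Equiv.Perm (Fin (m+1))) :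
    ∑ p : Fin (m+2), (Polynomial.X : Polynomial ℤ) ^ (des (ins σ p) + 1) =
      (des σ + 1) • (Polynomial.X : Polynomial ℤ) ^ (des σ + 1) +
      (m + 1 - des σ) • (Polynomial.X : Polynomial ℤ) ^ (des σ + 2) := by
  classical
  rw [← Finset.sum_filter_add_sum_filter_not Finset.univ (fun p => Goodp σ p)]
  have h1 : ∀ p ∈ Finset.univ.filter (fun p => Goodp σ p),
      (Polynomial.X : Polynomial ℤ) ^ (des (ins σ p) + 1) =
      (Polynomial.X : Polynomial ℤ) ^ (des σ + 1) := by
    intro p hp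
    rw [des_ins, if_pos (Finset.mem_filter.mp hp).2, add_zero]
  have h2 : ∀ p ∈ Finset.univ.filter (fun p => ¬ Goodp σ p),
      (Polynomial.X : Polynomial ℤ) ^ (des (ins σ p) + 1) =
      (Polynomial.X : Polynomial ℤ) ^ (des σ + 2) := by
    intro p hp
    rw [des_ins, if_neg (Finset.mem_filter.mp hp).2]
  rw [Finset.sum_congr rfl h1, Finset.sum_congr rfl h2, Finset.sum_const, Finset.sum_const]
  have hc1 : (Finset.univ.filter fun p => Goodp σ p).card = des σ + 1 := card_GoodSet σ
  have hc2 : (Finset.univ.filter fun p => ¬ Goodp σ p).card = m + 1 - des σ := by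
    have := Finset.card_filter_add_card_filter_not (s := (Finset.univ : Finset (Fin (m+2))))
      (p := fun p => Goodp σ p)
    simp only [Finset.card_univ, Fintype.card_fin] at this
    have hle := des_le σ
    omega
  rw [hc1, hc2]

lemma euler_rec (m : ℕ) :
    eulerianPoly (m+2) = Polynomial.C ((m : ℤ)+2) * Polynomial.X * eulerianPoly (m+1) +
      Polynomial.X * (1 - Polynomial.X) * Polynomial.derivative (eulerianPoly (m+1)) := by
  classical
  have hmain : eulerianPoly (m+2) =
      ∑ σ : Equiv.Perm (Fin (m+1)), ((des σ + 1) • (Polynomial.X : Polynomial ℤ) ^ (des σ + 1) +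
        (m + 1 - des σ) • (Polynomial.X : Polynomial ℤ) ^ (des σ + 2)) := by
    rw [eulerianPoly, ← Fintype.sum_bijective _ ins_bijective
      (fun x : Equiv.Perm (Fin (m+1)) × Fin (m+2) => (Polynomial.X : Polynomial ℤ) ^ (des (ins x.1 x.2) + 1))
      _ (fun x => rfl)]
    rw [Fintype.sum_prod_type]
    exact Finset.sum_congr rfl fun σ _ => sum_ins σ
  rw [hmain, eulerianPoly, Polynomial.derivative_sum, Finset.mul_sum, Finset.mul_sum,
    ← Finset.sum_add_distrib]
  refine Finset.sum_congr rfl fun σ _ => ?_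
  have hk := des_le σ
  rw [Polynomial.derivative_X_pow]
  rw [nsmul_eq_mul, nsmul_eq_mul]
  simp only [map_add, map_one, map_ofNat, map_natCast]
  push_cast [Nat.cast_sub (show des σ ≤ m + 1 by omega)]
  ring

open Polynomial in
lemma indep (M : ℕ) (e : ℕ → ℕ) (c : ℕ → ℤ)
    (h : ∑ j ∈ Finset.Icc 1 M, C (c j) * X ^ j * (1 + X) ^ (e j) = 0) :
    ∀ j ∈ Finset.Icc 1 M, c j = 0 := by
  intro j hj
  induction j using Nat.strong_induction_on with
  | _ j ih =>
    have hco := congrArg (fun q => Polynomial.coeff q j) h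
    simp only [Polynomial.finset_sum_coeff, Polynomial.coeff_zero] at hco
    have hterm : ∀ k ∈ Finset.Icc 1 M,
        (C (c k) * X ^ k * (1 + X) ^ (e k)).coeff j = if k = j then c j else 0 := by
      intro k hk
      have hrw : C (c k) * X ^ k * (1 + X) ^ (e k) = C (c k) * (1 + X) ^ (e k) * X ^ k := by
        ring
      rw [hrw, Polynomial.coeff_mul_X_pow']
      rcases lt_trichotomy k j with hlt | heq | hgt
      · rw [if_pos hlt.le, if_neg (by omega), Polynomial.coeff_C_mul,
          ih k hlt (Finset.mem_Icc.mpr ⟨(Finset.mem_Icc.mp hk).1, by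
            have := (Finset.mem_Icc.mp hj).2; omega⟩)]
        ring
      · subst heq
        rw [if_pos le_rfl, if_pos rfl, Nat.sub_self, Polynomial.coeff_C_mul]
        have : ((1 + X : Polynomial ℤ) ^ (e k)).coeff 0 = 1 := by
          rw [Polynomial.coeff_zero_eq_eval_zero]
          simp
        rw [this, mul_one]
      · rw [if_neg (by omega), if_neg (by omega)]
    rw [Finset.sum_congr rfl hterm, Finset.sum_ite_eq' _ j, if_pos hj] at hco
    exact hco

open Polynomial in
lemma Tlem (n i : ℕ) (hi : 1 ≤ i) (h2 : 2 * i ≤ n + 1) :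
    C ((n : ℤ) + 1) * X * (X ^ i * (1 + X) ^ (n + 1 - 2 * i))
      + X * (1 - X) * derivative (X ^ i * (1 + X) ^ (n + 1 - 2 * i))
    = C (i : ℤ) * X ^ i * (1 + X) ^ (n + 2 - 2 * i)
      + C (2 * ((n : ℤ) + 1 - 2 * i)) * X ^ (i + 1) * (1 + X) ^ (n - 2 * i) := by
  obtain ⟨i', rfl⟩ : ∃ i', i = i' + 1 := ⟨i - 1, by omega⟩
  set m := n + 1 - 2 * (i' + 1) with hm
  clear_value m
  have hmz : (m : ℤ) = (n : ℤ) + 1 - 2 * ((i' : ℤ) + 1) := by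
    rw [hm]; push_cast [Nat.cast_sub h2]; ring
  have he1 : n + 2 - 2 * (i' + 1) = m + 1 := by omega
  have he2 : n - 2 * (i' + 1) = m - 1 := by omega
  rw [he1, he2]
  have hder : derivative (X ^ (i' + 1) * (1 + X) ^ m : Polynomial ℤ) =
      C ((i' : ℤ) + 1) * X ^ i' * (1 + X) ^ m + C (m : ℤ) * X ^ (i' + 1) * (1 + X) ^ (m - 1) := by
    rw [Polynomial.derivative_mul, Polynomial.derivative_X_pow, Polynomial.derivative_pow]
    have : derivative (1 + X : Polynomial ℤ) = 1 := by
      rw [Polynomial.derivative_add, Polynomial.derivative_one, Polynomial.derivative_X,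
        zero_add]
    rw [this]
    push_cast
    ring
  rw [hder]
  push_cast
  rw [show ((n : ℤ) + 1) = 2 * ((i' : ℤ) + 1) + (m : ℤ) from by omega]
  simp only [map_add, map_mul, map_sub, map_one, map_ofNat, map_natCast]
  rcases Nat.eq_zero_or_pos m with hm0 | hmpos
  · subst hm0
    norm_num
    ring
  · obtain ⟨m', rfl⟩ : ∃ m', m = m' + 1 := ⟨m - 1, by omega⟩
    simp only [Nat.add_sub_cancel]
    push_cast
    ring


open Polynomial in
lemma Cfact (a b : ℤ) (q r : Polynomial ℤ) : C a * (C b * q * r) = C (a * b) * q * r := by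
  rw [Polynomial.C_mul]; ring

open Polynomial in
lemma euler_rec' (n : ℕ) (hn : 1 ≤ n) :
    eulerianPoly (n+1) = C ((n : ℤ) + 1) * X * eulerianPoly n +
      X * (1 - X) * derivative (eulerianPoly n) := by
  obtain ⟨m, rfl⟩ : ∃ m, n = m + 1 := ⟨n - 1, by omega⟩
  have h := euler_rec m
  have hcc : ((m + 1 : ℕ) : ℤ) + 1 = (m : ℤ) + 2 := by push_cast; omega
  rw [show m + 1 + 1 = m + 2 from rfl, h, hcc]

open Polynomial in
lemma expand_rec (γ : ℕ → ℕ → ℤ)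
    (hexp : ∀ n : ℕ, 1 ≤ n →
      eulerianPoly n =
        ∑ i ∈ Finset.Icc 1 ((n + 1) / 2),
          C (γ n i) * X ^ i * (1 + X) ^ (n + 1 - 2 * i))
    (hvanish : ∀ n i : ℕ, 1 ≤ n → (i = 0 ∨ (n + 1) / 2 < i) → γ n i = 0)
    (n : ℕ) (hn : 1 ≤ n) :
    eulerianPoly (n+1) =
      ∑ j ∈ Finset.Icc 1 ((n + 2) / 2),
        C ((j : ℤ) * γ n j + 2 * ((n : ℤ) + 3 - 2 * j) * γ n (j - 1)) * X ^ j
          * (1 + X) ^ (n + 2 - 2 * j) := by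
  classical
  set M := (n + 1) / 2 with hM
  set M' := (n + 2) / 2 with hM'
  have hM1 : 1 ≤ M := by omega
  set F : ℕ → Polynomial ℤ :=
    fun j => C (γ n j * (j : ℤ)) * X ^ j * (1 + X) ^ (n + 2 - 2 * j) with hF
  set G : ℕ → Polynomial ℤ :=
    fun j => C (γ n (j - 1) * (2 * ((n : ℤ) + 3 - 2 * j))) * X ^ j
      * (1 + X) ^ (n + 2 - 2 * j) with hG
  have hterm : ∀ i ∈ Finset.Icc 1 M,
      C ((n : ℤ) + 1) * X * (C (γ n i) * X ^ i * (1 + X) ^ (n + 1 - 2 * i)) +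
        X * (1 - X) * derivative (C (γ n i) * X ^ i * (1 + X) ^ (n + 1 - 2 * i)) =
      F i + C (γ n i * (2 * ((n : ℤ) + 1 - 2 * i))) * X ^ (i + 1) * (1 + X) ^ (n - 2 * i) := by
    intro i hi
    obtain ⟨hi1, hi2⟩ := Finset.mem_Icc.mp hi
    have h2 : 2 * i ≤ n + 1 := by omega
    have hfac : C (γ n i) * X ^ i * (1 + X) ^ (n + 1 - 2 * i) =
        C (γ n i) * (X ^ i * (1 + X) ^ (n + 1 - 2 * i)) := by ring
    rw [hfac, Polynomial.derivative_C_mul]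
    have hcollect : C ((n : ℤ) + 1) * X * (C (γ n i) * (X ^ i * (1 + X) ^ (n + 1 - 2 * i))) +
        X * (1 - X) * (C (γ n i) * derivative (X ^ i * (1 + X) ^ (n + 1 - 2 * i))) =
        C (γ n i) * (C ((n : ℤ) + 1) * X * (X ^ i * (1 + X) ^ (n + 1 - 2 * i)) +
          X * (1 - X) * derivative (X ^ i * (1 + X) ^ (n + 1 - 2 * i))) := by ring
    rw [hcollect, Tlem n i hi1 h2, mul_add, Cfact, Cfact, hF]
  have hstep := euler_rec' n hn
  rw [hexp n hn] at hstep
  rw [hstep, derivative_sum, Finset.mul_sum, Finset.mul_sum, ← Finset.sum_add_distrib,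
    Finset.sum_congr rfl hterm, Finset.sum_add_distrib]
  -- S1 : extend to Icc 1 (M+1)
  have hS1 : ∑ i ∈ Finset.Icc 1 M, F i = ∑ j ∈ Finset.Icc 1 (M + 1), F j := by
    rw [Finset.sum_Icc_succ_top (by omega) F]
    have : γ n (M + 1) = 0 := hvanish n (M + 1) hn (Or.inr (by omega))
    rw [hF]
    simp [this]
  -- S2 : reindex
  have hS2 : ∑ i ∈ Finset.Icc 1 M,
      C (γ n i * (2 * ((n : ℤ) + 1 - 2 * i))) * X ^ (i + 1) * (1 + X) ^ (n - 2 * i) =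
      ∑ j ∈ Finset.Icc 2 (M + 1), G j := by
    refine Finset.sum_bij' (fun i _ => i + 1) (fun j _ => j - 1) ?_ ?_ ?_ ?_ ?_
    · intro a ha
      simp only [Finset.mem_Icc] at ha ⊢
      omega
    · intro a ha
      simp only [Finset.mem_Icc] at ha ⊢
      omega
    · intro a ha
      show a + 1 - 1 = a
      omega
    · intro a ha
      simp only [Finset.mem_Icc] at ha
      show a - 1 + 1 = a
      omega
    · intro a ha
      simp only [Finset.mem_Icc] at ha
      rw [hG]
      have he : n + 2 - 2 * (a + 1) = n - 2 * a := by omega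
      simp only [Nat.add_sub_cancel, he]
      congr 2
      push_cast
      ring
  rw [hS1, hS2]
  -- S2 : extend down to 1
  have hS3 : ∑ j ∈ Finset.Icc 2 (M + 1), G j = ∑ j ∈ Finset.Icc 1 (M + 1), G j := by
    rw [show Finset.Icc 1 (M + 1) = insert 1 (Finset.Icc 2 (M + 1)) from by
      ext x; simp [Finset.mem_Icc]; omega]
    rw [Finset.sum_insert (by simp)]
    have : γ n 0 = 0 := hvanish n 0 hn (Or.inl rfl)
    rw [hG]
    simp [this]
  rw [hS3, ← Finset.sum_add_distrib]
  -- combine coefficients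
  have hFG : ∀ j ∈ Finset.Icc 1 (M + 1), F j + G j =
      C ((j : ℤ) * γ n j + 2 * ((n : ℤ) + 3 - 2 * j) * γ n (j - 1)) * X ^ j
        * (1 + X) ^ (n + 2 - 2 * j) := by
    intro j hj
    rw [hF, hG]
    simp only
    rw [← add_mul, ← add_mul, ← Polynomial.C_add]
    congr 2
    ring
  rw [Finset.sum_congr rfl hFG]
  -- adjust the top index
  by_cases hpar : M + 1 = M'
  · rw [hpar]
  · have hMM : M' = M := by omega
    have hodd : 2 * (M + 1) = n + 3 := by omega
    rw [Finset.sum_Icc_succ_top (by omega), hMM]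
    have hz1 : γ n (M + 1) = 0 := hvanish n (M + 1) hn (Or.inr (by omega))
    have hz2 : (n : ℤ) + 3 - 2 * ((M : ℤ) + 1) = 0 := by
      have : (2 : ℤ) * ((M : ℤ) + 1) = (n : ℤ) + 3 := by exact_mod_cast congrArg (Nat.cast : ℕ → ℤ) hodd
      omega
    have : ((M + 1 : ℕ) : ℤ) * γ n (M + 1) +
        2 * ((n : ℤ) + 3 - 2 * ((M + 1 : ℕ) : ℤ)) * γ n (M + 1 - 1) = 0 := by
      push_cast
      rw [hz1]
      rw [show (n : ℤ) + 3 - 2 * ((M : ℤ) + 1) = 0 from hz2]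
      ring
    rw [this]
    simp

open Polynomial in
lemma euler_one : eulerianPoly 1 = X := by
  have hdes : ∀ π : Equiv.Perm (Fin 1), des π = 0 := by
    intro π
    unfold des
    rw [Finset.filter_eq_empty_iff.mpr, Finset.card_empty]
    intro i _
    rintro ⟨h1, -⟩
    omega
  unfold eulerianPoly
  rw [Finset.sum_congr rfl (fun π _ => by rw [hdes π])]
  rw [Finset.sum_const, Finset.card_univ]
  simp [Fintype.card_perm]

end StmtAux

/-- The coefficients `γ n i` of the (unique) expansion of `A_n(t)` in the basis
`{t^i (1+t)^(n+1-2i)}_{1 ≤ i ≤ ⌈n/2⌉}` (vanishing outside that range) satisfy the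
recurrence `γ_{n+1,i} = i γ_{n,i} + 2(n+3-2i) γ_{n,i-1}`, with `γ_{1,1} = 1` and
`γ_{1,i} = 0` for `i ≠ 1`. -/
theorem stmt_3 (γ : ℕ → ℕ → ℤ)
    (hexp : ∀ n : ℕ, 1 ≤ n →
      eulerianPoly n =
        ∑ i ∈ Finset.Icc 1 ((n + 1) / 2),
          Polynomial.C (γ n i) * Polynomial.X ^ i * (1 + Polynomial.X) ^ (n + 1 - 2 * i))
    (hvanish : ∀ n i : ℕ, 1 ≤ n → (i = 0 ∨ (n + 1) / 2 < i) → γ n i = 0) :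
    (γ 1 1 = 1 ∧ ∀ i : ℕ, i ≠ 1 → γ 1 i = 0) ∧
    ∀ n : ℕ, 1 ≤ n → ∀ i : ℕ, 1 ≤ i →
      γ (n + 1) i = (i : ℤ) * γ n i + 2 * ((n : ℤ) + 3 - 2 * i) * γ n (i - 1) := by
  classical
  constructor
  · constructor
    · have e1 := hexp 1 le_rfl
      rw [StmtAux.euler_one] at e1
      rw [show (1 + 1) / 2 = 1 from rfl, Finset.Icc_self, Finset.sum_singleton] at e1
      rw [show 1 + 1 - 2 * 1 = 0 from rfl, pow_zero, mul_one, pow_one] at e1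
      have := congrArg (fun q => q.coeff 1) e1
      simp only [Polynomial.coeff_C_mul, Polynomial.coeff_X_one, mul_one] at this
      exact this.symm
    · intro i hi
      exact hvanish 1 i le_rfl (by omega)
  · intro n hn i hi
    have hrec := StmtAux.expand_rec γ hexp hvanish n hn
    have he := hexp (n + 1) (by omega)
    rw [show n + 1 + 1 = n + 2 from rfl] at he
    have hzero : ∀ j ∈ Finset.Icc 1 ((n + 2) / 2),
        γ (n + 1) j - ((j : ℤ) * γ n j + 2 * ((n : ℤ) + 3 - 2 * j) * γ n (j - 1)) = 0 := by
      apply StmtAux.indep ((n + 2) / 2) (fun j => n + 2 - 2 * j)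
      simp only [map_sub, sub_mul]
      rw [Finset.sum_sub_distrib, ← he, ← hrec, sub_self]
    by_cases hle : i ≤ (n + 2) / 2
    · have := hzero i (Finset.mem_Icc.mpr ⟨hi, hle⟩)
      omega
    · push_neg at hle
      have h1 : γ (n + 1) i = 0 := hvanish (n + 1) i (by omega) (Or.inr (by omega))
      have h2 : γ n i = 0 := hvanish n i hn (Or.inr (by omega))
      by_cases hodd : 2 * i = n + 3
      · have hcz : (n : ℤ) + 3 - 2 * (i : ℤ) = 0 := by
          have : ((2 * i : ℕ) : ℤ) = ((n + 3 : ℕ) : ℤ) := by exact_mod_cast congrArg (Nat.cast : ℕ → ℤ) hodd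
          push_cast at this
          omega
        rw [h1, h2, hcz]
        ring
      · have h3 : γ n (i - 1) = 0 := hvanish n (i - 1) hn (Or.inr (by omega))
        rw [h1, h2, h3]
        ring
end

section
/- For n ≥ 2, the four-variable polynomial satisfies n·A_n(s,t;x,y) = (n-1)(s-x)(t-y)·A_{n-1}(s,t;x,y) + s·t·x·y·(∂/∂s + ∂/∂x)(∂/∂t + ∂/∂y)A_{n-1}(s,t;x,y), with A_1(s,t;x,y) = stxy. -/
open MvPolynomial

/-- The four-variable polynomial `A_n(s,t;x,y)` with `s = X 0`, `t = X 1`,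
`x = X 2`, `y = X 3`. -/
noncomputable def fourVarEulerian (n : ℕ) : MvPolynomial (Fin 4) ℤ :=
  ∑ π : Equiv.Perm (Fin n),
    X 0 ^ (des π⁻¹ + 1) * X 1 ^ (des π + 1) * X 2 ^ (n - des π⁻¹) * X 3 ^ (n - des π)

namespace FVE

open Equiv Finset

variable {m : ℕ}

/-- The extended word of a permutation: `wrd σ 0 = m+1`, `wrd σ p = σ (p-1) + 1`
for `1 ≤ p ≤ m`, and `0` afterwards. -/
def wrd (σ : Equiv.Perm (Fin m)) (p : ℕ) : ℕ :=
  if p = 0 then m + 1 else if h : p - 1 < m then (σ ⟨p - 1, h⟩ : ℕ) + 1 else 0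

lemma wrd_zero (σ : Equiv.Perm (Fin m)) : wrd σ 0 = m + 1 := by simp [wrd]

lemma wrd_succ (σ : Equiv.Perm (Fin m)) {p : ℕ} (h : p < m) :
    wrd σ (p + 1) = σ ⟨p, h⟩ + 1 := by simp [wrd, h]

lemma wrd_of_gt (σ : Equiv.Perm (Fin m)) {p : ℕ} (h : m < p) : wrd σ p = 0 := by
  have h0 : p ≠ 0 := by omega
  have h1 : ¬ (p - 1 < m) := by omega
  simp [wrd, h0, h1]

lemma wrd_le (σ : Equiv.Perm (Fin m)) (p : ℕ) : wrd σ p ≤ m + 1 := by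
  unfold wrd
  split
  · exact le_rfl
  · split
    · next h => have := Fin.is_lt (σ ⟨p - 1, h⟩); omega
    · omega

lemma wrd_pos (σ : Equiv.Perm (Fin m)) {p : ℕ} (h : p ≤ m) : 0 < wrd σ p := by
  unfold wrd
  split
  · omega
  · have : p - 1 < m := by omega
    simp [this]

lemma wrd_lt_of_pos (σ : Equiv.Perm (Fin m)) {p : ℕ} (h : p ≠ 0) : wrd σ p ≤ m := by
  unfold wrd
  split
  · omega
  · split
    · exact Nat.succ_le_of_lt (Fin.is_lt _)
    · omega

lemma wrd_ne (σ : Equiv.Perm (Fin m)) {p : ℕ} (h : p ≤ m) :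
    wrd σ (p + 1) ≠ wrd σ p := by
  rcases Nat.eq_zero_or_pos p with rfl | hp
  · rcases Nat.eq_zero_or_pos m with rfl | hm
    · rw [wrd_zero, wrd_of_gt _ (by omega)]; omega
    · have h1 : wrd σ (0 + 1) ≤ m := wrd_lt_of_pos σ (p := 0 + 1) (by omega)
      rw [wrd_zero]; omega
  · obtain ⟨q, rfl⟩ : ∃ q, p = q + 1 := ⟨p - 1, by omega⟩
    rcases Nat.lt_or_ge (q + 1) m with hpm | hpm
    · rw [wrd_succ σ hpm, wrd_succ σ (by omega : q < m)]
      intro hc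
      have h2 : σ ⟨q + 1, hpm⟩ = σ ⟨q, by omega⟩ := by
        apply Fin.ext; omega
      have h3 := σ.injective h2
      simp only [Fin.mk.injEq] at h3
      omega
    · have hpm' : q + 1 = m := le_antisymm h hpm
      rw [wrd_of_gt σ (by omega)]
      have h4 := wrd_pos σ (p := q + 1) h
      omega

lemma wrd_succ_eq (σ : Equiv.Perm (Fin m)) {p : ℕ} (h : p < m) :
    wrd σ (p + 1) - 1 = σ ⟨p, h⟩ := by rw [wrd_succ σ h]; omega



lemma des_eq_sum {M : ℕ} (σ : Equiv.Perm (Fin (M+1))) :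
    des σ = ∑ i ∈ Finset.range (M+1),
      (if i + 1 < M + 1 ∧ wrd σ (i+2) < wrd σ (i+1) then 1 else 0) := by
  rw [des, Finset.card_filter,
    ← Fin.sum_univ_eq_sum_range
      (fun i => if i + 1 < M + 1 ∧ wrd σ (i+2) < wrd σ (i+1) then 1 else 0) (M+1)]
  refine Finset.sum_congr rfl fun i _ => ?_
  refine if_congr (and_congr_right fun h => ?_) rfl rfl
  have h1 : finRotate (M+1) i = ⟨(i : ℕ) + 1, h⟩ := by
    rw [finRotate_succ_apply]
    apply Fin.ext
    rw [Fin.val_add_one_of_lt]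
    simp only [Fin.lt_iff_val_lt_val, Fin.val_last]
    omega
  have e2 : wrd σ ((i:ℕ)+2) = σ ⟨(i:ℕ)+1, h⟩ + 1 := wrd_succ σ h
  have e1 : wrd σ ((i:ℕ)+1) = σ ⟨(i:ℕ), i.isLt⟩ + 1 := wrd_succ σ i.isLt
  rw [h1, e2, e1, Fin.eta]
  simp only [Fin.lt_def]
  omega

lemma des_add_two {M : ℕ} (σ : Equiv.Perm (Fin (M+1))) :
    des σ + 2 = ∑ p ∈ Finset.range (M+2), (if wrd σ (p+1) < wrd σ p then 1 else 0) := by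
  set F : ℕ → ℕ := fun p => if wrd σ (p + 1) < wrd σ p then 1 else 0 with hF
  have h1 : (Finset.range (M+2)).sum F
      = (∑ i ∈ Finset.range (M+1), F (i+1)) + F 0 := Finset.sum_range_succ' F (M+1)
  have h2 : (∑ i ∈ Finset.range (M+1), F (i+1))
      = (∑ i ∈ Finset.range M, F (i+1)) + F (M+1) := Finset.sum_range_succ _ M
  have hlast : F (M+1) = 1 := by
    rw [hF]
    simp only
    rw [if_pos]
    rw [wrd_of_gt σ (show M + 1 < M + 1 + 1 by omega)]
    exact wrd_pos σ (by omega)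
  have hfirst : F 0 = 1 := by
    rw [hF]
    simp only
    rw [if_pos]
    rw [wrd_zero]
    have := wrd_lt_of_pos σ (p := 0+1) (by omega)
    omega
  have h3 : des σ = ∑ i ∈ Finset.range M, F (i+1) := by
    rw [des_eq_sum σ, Finset.sum_range_succ]
    have hz : (if M + 1 < M + 1 ∧ wrd σ (M+2) < wrd σ (M+1) then 1 else 0) = 0 := by
      rw [if_neg]; omega
    rw [hz, add_zero]
    refine Finset.sum_congr rfl fun i hi => ?_
    rw [Finset.mem_range] at hi
    have : (i:ℕ) + 1 < M + 1 := by omega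
    rw [hF]
    simp only [this, true_and]
  omega

lemma sum_asc {M : ℕ} (σ : Equiv.Perm (Fin (M+1))) :
    (∑ p ∈ Finset.range (M+2), if wrd σ p < wrd σ (p+1) then (1:ℤ) else 0)
      = (M:ℤ) - des σ := by
  have key : ∀ p ∈ Finset.range (M+2),
      (if wrd σ p < wrd σ (p+1) then (1:ℤ) else 0)
        = 1 - (if wrd σ (p+1) < wrd σ p then (1:ℤ) else 0) := by
    intro p hp
    rw [Finset.mem_range] at hp
    have hne := wrd_ne σ (p := p) (by omega)
    rcases Nat.lt_or_ge (wrd σ p) (wrd σ (p+1)) with h | h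
    · rw [if_pos h, if_neg (by omega)]; ring
    · rw [if_neg (by omega), if_pos (by omega)]; ring
  rw [Finset.sum_congr rfl key, Finset.sum_sub_distrib]
  have h := congrArg (fun k : ℕ => (k : ℤ)) (des_add_two σ)
  push_cast at h
  rw [← h]
  simp only [Finset.sum_const, Finset.card_range, nsmul_eq_mul, mul_one]
  push_cast
  ring

/-- Insert a new position `p` with new value `v` into a permutation. -/
def ins (σ : Equiv.Perm (Fin m)) (p v : Fin (m+1)) : Equiv.Perm (Fin (m+1)) :=
  ((finSuccEquiv' p).trans (Equiv.optionCongr σ)).trans (finSuccEquiv' v).symm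

lemma ins_apply_self (σ : Equiv.Perm (Fin m)) (p v : Fin (m+1)) : ins σ p v p = v := by
  simp [ins, finSuccEquiv'_at]

lemma ins_apply_succAbove (σ : Equiv.Perm (Fin m)) (p v : Fin (m+1)) (i : Fin m) :
    ins σ p v (p.succAbove i) = v.succAbove (σ i) := by
  simp [ins, finSuccEquiv'_succAbove]

lemma ins_inv (σ : Equiv.Perm (Fin m)) (p v : Fin (m+1)) :
    (ins σ p v)⁻¹ = ins σ⁻¹ v p := by
  show (ins σ p v).symm = ins σ⁻¹ v p
  ext x
  simp [ins, Equiv.Perm.inv_def]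

/-- shift function: insert value `V` (1-based). -/
def sh (V u : ℕ) : ℕ := if u < V then u else u + 1

lemma val_succAbove (v : Fin (m+1)) (j : Fin m) :
    ((v.succAbove j : Fin (m+1)) : ℕ) + 1 = sh ((v:ℕ)+1) ((j:ℕ)+1) := by
  unfold sh
  rcases lt_or_ge (Fin.castSucc j) v with h | h
  · rw [Fin.succAbove_of_castSucc_lt _ _ h]
    rw [if_pos]
    · simp
    · simp only [Fin.lt_def, Fin.coe_castSucc] at h
      omega
  · rw [Fin.succAbove_of_le_castSucc _ _ h]
    rw [if_neg]
    · simp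
    · simp only [Fin.le_def, Fin.coe_castSucc] at h
      omega

lemma wrd_ins (σ : Equiv.Perm (Fin m)) (p v : Fin (m+1)) (x : ℕ) :
    wrd (ins σ p v) x =
      if x < (p:ℕ) + 1 then sh ((v:ℕ)+1) (wrd σ x)
      else if x = (p:ℕ) + 1 then (v:ℕ) + 1
      else sh ((v:ℕ)+1) (wrd σ (x - 1)) := by
  have hv : (v:ℕ) < m + 1 := v.isLt
  have hp : (p:ℕ) < m + 1 := p.isLt
  rcases x with _ | y
  · rw [if_pos (by omega)]
    rw [wrd_zero, wrd_zero]
    unfold sh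
    rw [if_neg (by omega)]
  · rcases Nat.lt_or_ge y (p:ℕ) with hy | hy
    · -- position y < p
      rw [if_pos (by omega)]
      have hym : y < m := by omega
      have hpos : (⟨y, by omega⟩ : Fin (m+1)) = p.succAbove ⟨y, hym⟩ := by
        rw [Fin.succAbove_of_castSucc_lt _ _ (by simp [Fin.lt_def]; omega)]
        rfl
      rw [wrd_succ (ins σ p v) (show y < m + 1 by omega), hpos, ins_apply_succAbove,
        val_succAbove, wrd_succ σ hym]
    · rcases Nat.eq_or_lt_of_le hy with hy' | hy'
      · -- position y = p
        rw [if_neg (by omega), if_pos (by omega)]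
        have hpos : (⟨y, by omega⟩ : Fin (m+1)) = p := by apply Fin.ext; simp [← hy']
        rw [wrd_succ (ins σ p v) (show y < m + 1 by omega), hpos, ins_apply_self]
      · -- position y > p
        rw [if_neg (by omega), if_neg (by omega)]
        rcases Nat.lt_or_ge y (m+1) with hym | hym
        · obtain ⟨z, rfl⟩ : ∃ z, y = z + 1 := ⟨y - 1, by omega⟩
          have hzm : z < m := by omega
          have hpos : (⟨z + 1, by omega⟩ : Fin (m+1)) = p.succAbove ⟨z, hzm⟩ := by
            rw [Fin.succAbove_of_le_castSucc _ _ (by simp [Fin.le_def]; omega)]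
            rfl
          rw [wrd_succ (ins σ p v) (show z + 1 < m + 1 by omega), hpos, ins_apply_succAbove,
            val_succAbove]
          have : wrd σ (z + 1 + 1 - 1) = σ ⟨z, hzm⟩ + 1 := wrd_succ σ hzm
          rw [this]
        · rw [wrd_of_gt (ins σ p v) (by omega), wrd_of_gt σ (by omega)]
          unfold sh
          rw [if_pos (by omega)]

lemma sh_lt_sh {V u w : ℕ} : (sh V u < sh V w) ↔ u < w := by
  unfold sh; split_ifs <;> omega

lemma lt_sh_self {V u : ℕ} : (V < sh V u) ↔ V ≤ u := by
  unfold sh; split_ifs <;> omega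

lemma sh_lt_self {V u : ℕ} : (sh V u < V) ↔ u < V := by
  unfold sh; split_ifs <;> omega

lemma wrd_ins_lt (σ : Equiv.Perm (Fin m)) (p v : Fin (m+1)) {x : ℕ} (h : x < (p:ℕ) + 1) :
    wrd (ins σ p v) x = sh ((v:ℕ)+1) (wrd σ x) := by
  rw [wrd_ins, if_pos h]

lemma wrd_ins_eq (σ : Equiv.Perm (Fin m)) (p v : Fin (m+1)) :
    wrd (ins σ p v) ((p:ℕ)+1) = (v:ℕ)+1 := by
  rw [wrd_ins, if_neg (by omega), if_pos rfl]

lemma wrd_ins_gt (σ : Equiv.Perm (Fin m)) (p v : Fin (m+1)) {x : ℕ} (h : (p:ℕ) + 1 < x) :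
    wrd (ins σ p v) x = sh ((v:ℕ)+1) (wrd σ (x-1)) := by
  rw [wrd_ins, if_neg (by omega), if_neg (by omega)]

/-- The change in the number of descents when inserting position `p`, value `v`. -/
def dd (σ : Equiv.Perm (Fin m)) (p v : ℕ) : ℤ :=
  (if v + 1 ≤ wrd σ p then (1:ℤ) else 0) + (if wrd σ (p+1) < v + 1 then (1:ℤ) else 0)
    - (if wrd σ (p+1) < wrd σ p then (1:ℤ) else 0)

lemma des_ins {M : ℕ} (σ : Equiv.Perm (Fin (M+1))) (p v : Fin (M+2)) :
    (des (ins σ p v) : ℤ) = des σ + dd σ (p:ℕ) (v:ℕ) := by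
  have hp : (p:ℕ) < M + 2 := p.isLt
  have hv : (v:ℕ) < M + 2 := v.isLt
  set π := ins σ p v with hπ
  set F : ℕ → ℕ := fun x => if wrd π (x + 1) < wrd π x then 1 else 0 with hF
  set G : ℕ → ℕ := fun x => if wrd σ (x + 1) < wrd σ x then 1 else 0 with hG
  have hF0 : ∀ x < (p:ℕ), F x = G x := by
    intro x hx
    rw [hF, hG]
    simp only
    rw [wrd_ins_lt σ p v (by omega : x < (p:ℕ)+1),
      wrd_ins_lt σ p v (by omega : x + 1 < (p:ℕ)+1)]
    simp [sh_lt_sh]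
  have hFp : F (p:ℕ) = if (v:ℕ) + 1 ≤ wrd σ (p:ℕ) then 1 else 0 := by
    rw [hF]
    simp only
    rw [wrd_ins_eq σ p v, wrd_ins_lt σ p v (by omega : (p:ℕ) < (p:ℕ)+1)]
    simp only [lt_sh_self]
  have hFp1 : F ((p:ℕ)+1) = if wrd σ ((p:ℕ)+1) < (v:ℕ) + 1 then 1 else 0 := by
    rw [hF]
    simp only
    rw [wrd_ins_eq σ p v, wrd_ins_gt σ p v (by omega : (p:ℕ)+1 < (p:ℕ)+1+1)]
    rw [show (p:ℕ)+1+1-1 = (p:ℕ)+1 by omega]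
    simp only [sh_lt_self]
  have hF2 : ∀ x, (p:ℕ)+2 ≤ x → F x = G (x-1) := by
    intro x hx
    rw [hF, hG]
    simp only
    rw [wrd_ins_gt σ p v (by omega : (p:ℕ)+1 < x),
      wrd_ins_gt σ p v (by omega : (p:ℕ)+1 < x + 1)]
    rw [show x + 1 - 1 = (x - 1) + 1 by omega]
    simp [sh_lt_sh]
  -- sum decompositions
  have s1 : ∑ x ∈ Finset.Ico 0 ((p:ℕ)+2), F x + ∑ x ∈ Finset.Ico ((p:ℕ)+2) (M+3), F x
      = ∑ x ∈ Finset.Ico 0 (M+3), F x :=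
    Finset.sum_Ico_consecutive _ (by omega) (by omega)
  have s2 : ∑ x ∈ Finset.Ico 0 ((p:ℕ)+1), F x + ∑ x ∈ Finset.Ico ((p:ℕ)+1) ((p:ℕ)+2), F x
      = ∑ x ∈ Finset.Ico 0 ((p:ℕ)+2), F x :=
    Finset.sum_Ico_consecutive _ (by omega) (by omega)
  have s3 : ∑ x ∈ Finset.Ico 0 (p:ℕ), F x + ∑ x ∈ Finset.Ico (p:ℕ) ((p:ℕ)+1), F x
      = ∑ x ∈ Finset.Ico 0 ((p:ℕ)+1), F x :=
    Finset.sum_Ico_consecutive _ (by omega) (by omega)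
  have e1 : ∑ x ∈ Finset.Ico (p:ℕ) ((p:ℕ)+1), F x = F (p:ℕ) := by
    rw [Finset.sum_Ico_eq_sum_range, show (p:ℕ)+1-(p:ℕ) = 1 by omega,
      Finset.sum_range_one, add_zero]
  have e2 : ∑ x ∈ Finset.Ico ((p:ℕ)+1) ((p:ℕ)+2), F x = F ((p:ℕ)+1) := by
    rw [Finset.sum_Ico_eq_sum_range, show (p:ℕ)+2-((p:ℕ)+1) = 1 by omega,
      Finset.sum_range_one, add_zero]
  have e3 : ∑ x ∈ Finset.Ico 0 (p:ℕ), F x = ∑ x ∈ Finset.Ico 0 (p:ℕ), G x :=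
    Finset.sum_congr rfl fun x hx => hF0 x (by
      rw [Finset.mem_Ico] at hx; omega)
  have hshift : ∑ x ∈ Finset.Ico ((p:ℕ)+2) (M+3), F x
      = ∑ x ∈ Finset.Ico ((p:ℕ)+1) (M+2), G x := by
    rw [Finset.sum_Ico_eq_sum_range, Finset.sum_Ico_eq_sum_range]
    rw [show M + 3 - ((p:ℕ)+2) = M + 2 - ((p:ℕ)+1) by omega]
    refine Finset.sum_congr rfl fun i hi => ?_
    rw [hF2 ((p:ℕ)+2+i) (by omega)]
    congr 1
    omega
  have t1 : ∑ x ∈ Finset.Ico 0 ((p:ℕ)+1), G x + ∑ x ∈ Finset.Ico ((p:ℕ)+1) (M+2), G x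
      = ∑ x ∈ Finset.Ico 0 (M+2), G x :=
    Finset.sum_Ico_consecutive _ (by omega) (by omega)
  have t2 : ∑ x ∈ Finset.Ico 0 (p:ℕ), G x + ∑ x ∈ Finset.Ico (p:ℕ) ((p:ℕ)+1), G x
      = ∑ x ∈ Finset.Ico 0 ((p:ℕ)+1), G x :=
    Finset.sum_Ico_consecutive _ (by omega) (by omega)
  have e4 : ∑ x ∈ Finset.Ico (p:ℕ) ((p:ℕ)+1), G x = G (p:ℕ) := by
    rw [Finset.sum_Ico_eq_sum_range, show (p:ℕ)+1-(p:ℕ) = 1 by omega,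
      Finset.sum_range_one, add_zero]
  have hdes1 : des π + 2 = ∑ x ∈ Finset.Ico 0 (M+3), F x := by
    rw [← Finset.range_eq_Ico]; exact des_add_two π
  have hdes2 : des σ + 2 = ∑ x ∈ Finset.Ico 0 (M+2), G x := by
    rw [← Finset.range_eq_Ico]; exact des_add_two σ
  have key : des π + G (p:ℕ) = des σ + F (p:ℕ) + F ((p:ℕ)+1) := by omega
  rw [hFp, hFp1] at key
  have hGp : G (p:ℕ) = if wrd σ ((p:ℕ)+1) < wrd σ (p:ℕ) then 1 else 0 := by rw [hG]
  rw [hGp] at key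
  unfold dd
  split_ifs at key ⊢ <;> push_cast <;> omega

lemma sum_ite_le (N c : ℕ) :
    (∑ v ∈ Finset.range N, if v + 1 ≤ c then (1:ℤ) else 0) = (min c N : ℕ) := by
  induction N with
  | zero => simp
  | succ n ih =>
      rw [Finset.sum_range_succ, ih]
      split_ifs with h <;> push_cast <;> omega

lemma sum_ite_lt (N c : ℕ) :
    (∑ v ∈ Finset.range N, if c < v + 1 then (1:ℤ) else 0) = (N:ℤ) - (min c N : ℕ) := by
  induction N with
  | zero => simp
  | succ n ih =>
      rw [Finset.sum_range_succ, ih]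
      split_ifs with h <;> push_cast <;> omega

lemma dd_mem {M : ℕ} (σ : Equiv.Perm (Fin (M+1))) (p v : ℕ) :
    dd σ p v = 0 ∨ dd σ p v = 1 := by
  unfold dd
  split_ifs <;> omega

lemma sum_dd {M : ℕ} (σ : Equiv.Perm (Fin (M+1))) :
    ∑ p ∈ Finset.range (M+2), ∑ v ∈ Finset.range (M+2), dd σ p v
      = (M+2) * ((M+1) - (des σ : ℤ)) := by
  have hrow : ∀ p ∈ Finset.range (M+2), ∑ v ∈ Finset.range (M+2), dd σ p v
      = ((wrd σ p : ℤ) - wrd σ (p+1)) + (M+2)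
        - (M+2) * (if wrd σ (p+1) < wrd σ p then (1:ℤ) else 0) := by
    intro p hp
    rw [Finset.mem_range] at hp
    unfold dd
    rw [Finset.sum_sub_distrib, Finset.sum_add_distrib]
    rw [sum_ite_le (M+2) (wrd σ p), sum_ite_lt (M+2) (wrd σ (p+1))]
    have h1 : min (wrd σ p) (M+2) = wrd σ p := min_eq_left (wrd_le σ p)
    have h2 : min (wrd σ (p+1)) (M+2) = wrd σ (p+1) := min_eq_left (wrd_le σ (p+1))
    rw [h1, h2, Finset.sum_const, Finset.card_range]
    push_cast
    ring
  rw [Finset.sum_congr rfl hrow]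
  rw [Finset.sum_sub_distrib, Finset.sum_add_distrib]
  have h3 : ∑ p ∈ Finset.range (M+2), ((wrd σ p : ℤ) - wrd σ (p+1))
      = (wrd σ 0 : ℤ) - wrd σ (M+2) :=
    Finset.sum_range_sub' (fun p => (wrd σ p : ℤ)) (M+2)
  have h4 : ∑ p ∈ Finset.range (M+2),
      ((M+2:ℤ) * (if wrd σ (p+1) < wrd σ p then (1:ℤ) else 0))
      = (M+2) * ((des σ : ℤ) + 2) := by
    rw [← Finset.mul_sum]
    congr 1
    have h := congrArg (fun k : ℕ => (k : ℤ)) (des_add_two σ)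
    push_cast at h
    rw [← h]
  rw [h3, h4, wrd_zero, wrd_of_gt σ (by omega)]
  rw [Finset.sum_const, Finset.card_range]
  push_cast
  ring

lemma dd_eq_asc {M : ℕ} (σ : Equiv.Perm (Fin (M+1))) {p : ℕ} (hp : p ≤ M+1) (v : ℕ) :
    dd σ p v = (if wrd σ p < wrd σ (p+1) then (1:ℤ) else 0)
      + ((if v + 1 ≤ wrd σ p then (1:ℤ) else 0) - (if v + 1 ≤ wrd σ (p+1) then (1:ℤ) else 0)) := by
  have hne := wrd_ne σ hp
  unfold dd
  split_ifs <;> omega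

lemma wrd_wrd_inv {M : ℕ} (σ : Equiv.Perm (Fin (M+1))) {v : ℕ} (h1 : 1 ≤ v) (h2 : v ≤ M+1) :
    wrd σ (wrd σ⁻¹ v) = v := by
  obtain ⟨u, rfl⟩ : ∃ u, v = u + 1 := ⟨v - 1, by omega⟩
  have hu : u < M + 1 := by omega
  rw [wrd_succ σ⁻¹ hu]
  rw [wrd_succ σ (σ⁻¹ ⟨u, hu⟩).isLt]
  rw [Fin.eta]
  rw [← Equiv.Perm.mul_apply, mul_inv_cancel, Equiv.Perm.one_apply]

lemma sum_dd_mul {M : ℕ} (σ : Equiv.Perm (Fin (M+1))) :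
    ∑ p ∈ Finset.range (M+2), ∑ v ∈ Finset.range (M+2), dd σ p v * dd σ⁻¹ v p
      = ((M+1) - (des σ : ℤ)) * ((M+1) - (des σ⁻¹ : ℤ)) + (M+1) := by
  set A : ℕ → ℤ := fun p => if wrd σ p < wrd σ (p+1) then (1:ℤ) else 0 with hA
  set B : ℕ → ℤ := fun v => if wrd σ⁻¹ v < wrd σ⁻¹ (v+1) then (1:ℤ) else 0 with hB
  set U : ℕ → ℕ → ℤ := fun p v =>
    (if v + 1 ≤ wrd σ p then (1:ℤ) else 0) - (if v + 1 ≤ wrd σ (p+1) then (1:ℤ) else 0) with hU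
  set W : ℕ → ℕ → ℤ := fun p v =>
    (if p + 1 ≤ wrd σ⁻¹ v then (1:ℤ) else 0) - (if p + 1 ≤ wrd σ⁻¹ (v+1) then (1:ℤ) else 0) with hW
  have hsplit : ∀ p ∈ Finset.range (M+2), ∀ v ∈ Finset.range (M+2),
      dd σ p v * dd σ⁻¹ v p = A p * B v + A p * W p v + U p v * B v + U p v * W p v := by
    intro p hp v hv
    rw [Finset.mem_range] at hp hv
    rw [dd_eq_asc σ (by omega) v, dd_eq_asc σ⁻¹ (by omega) p]
    rw [hA, hB, hU, hW]
    simp only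
    ring
  rw [Finset.sum_congr rfl fun p hp => Finset.sum_congr rfl fun v hv => hsplit p hp v hv]
  simp only [Finset.sum_add_distrib]
  -- the four pieces
  have hsumA : ∑ p ∈ Finset.range (M+2), A p = (M:ℤ) - des σ := sum_asc σ
  have hsumB : ∑ v ∈ Finset.range (M+2), B v = (M:ℤ) - des σ⁻¹ := sum_asc σ⁻¹
  have hrowW : ∀ p ∈ Finset.range (M+2), ∑ v ∈ Finset.range (M+2), W p v = 1 := by
    intro p hp
    rw [Finset.mem_range] at hp
    rw [hW]
    simp only
    rw [Finset.sum_range_sub' (fun v => if p + 1 ≤ wrd σ⁻¹ v then (1:ℤ) else 0) (M+2)]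
    rw [wrd_zero σ⁻¹, wrd_of_gt σ⁻¹ (by omega : M + 1 < M + 2)]
    rw [if_pos (by omega), if_neg (by omega)]
    ring
  have hcolU : ∀ v ∈ Finset.range (M+2), ∑ p ∈ Finset.range (M+2), U p v = 1 := by
    intro v hv
    rw [Finset.mem_range] at hv
    rw [hU]
    simp only
    rw [Finset.sum_range_sub' (fun p => if v + 1 ≤ wrd σ p then (1:ℤ) else 0) (M+2)]
    rw [wrd_zero σ, wrd_of_gt σ (by omega : M + 1 < M + 2)]
    rw [if_pos (by omega), if_neg (by omega)]
    ring
  have hS1 : ∑ p ∈ Finset.range (M+2), ∑ v ∈ Finset.range (M+2), A p * B v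
      = ((M:ℤ) - des σ) * ((M:ℤ) - des σ⁻¹) := by
    rw [← hsumA, ← hsumB, Finset.sum_mul_sum]
  have hS2 : ∑ p ∈ Finset.range (M+2), ∑ v ∈ Finset.range (M+2), A p * W p v
      = (M:ℤ) - des σ := by
    rw [← hsumA]
    refine Finset.sum_congr rfl fun p hp => ?_
    rw [← Finset.mul_sum, hrowW p hp, mul_one]
  have hS3 : ∑ p ∈ Finset.range (M+2), ∑ v ∈ Finset.range (M+2), U p v * B v
      = (M:ℤ) - des σ⁻¹ := by
    rw [Finset.sum_comm, ← hsumB]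
    refine Finset.sum_congr rfl fun v hv => ?_
    rw [← Finset.sum_mul, hcolU v hv, one_mul]
  -- the key cross term
  have hUc : ∀ v ∈ Finset.range (M+2), ∀ c : ℕ, c ≤ M+2 →
      ∑ p ∈ Finset.range (M+2), U p v * (if p + 1 ≤ c then (1:ℤ) else 0)
        = 1 - (if v + 1 ≤ wrd σ c then (1:ℤ) else 0) := by
    intro v hv c hc
    rw [Finset.mem_range] at hv
    have step : ∀ p, U p v * (if p + 1 ≤ c then (1:ℤ) else 0)
        = if p < c then U p v else 0 := by
      intro p
      split_ifs with h1 h2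
      · rw [mul_one]
      · omega
      · omega
      · rw [mul_zero]
    rw [Finset.sum_congr rfl fun p _ => step p, ← Finset.sum_filter]
    have hfil : (Finset.range (M+2)).filter (fun p => p < c) = Finset.range c := by
      ext x
      simp only [Finset.mem_filter, Finset.mem_range]
      omega
    rw [hfil, hU]
    simp only
    rw [Finset.sum_range_sub' (fun p => if v + 1 ≤ wrd σ p then (1:ℤ) else 0) c]
    rw [wrd_zero σ, if_pos (by omega)]
  have hS4 : ∑ p ∈ Finset.range (M+2), ∑ v ∈ Finset.range (M+2), U p v * W p v
      = (M:ℤ) + 2 := by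
    rw [Finset.sum_comm]
    have hinner : ∀ v ∈ Finset.range (M+2),
        ∑ p ∈ Finset.range (M+2), U p v * W p v = 1 := by
      intro v hv
      have hv' := Finset.mem_range.mp hv
      have expand : ∀ p, U p v * W p v
          = U p v * (if p + 1 ≤ wrd σ⁻¹ v then (1:ℤ) else 0)
            - U p v * (if p + 1 ≤ wrd σ⁻¹ (v+1) then (1:ℤ) else 0) := by
        intro p
        rw [hW]
        simp only
        ring
      rw [Finset.sum_congr rfl fun p _ => expand p, Finset.sum_sub_distrib]
      rw [hUc v hv _ (wrd_le σ⁻¹ v), hUc v hv _ (wrd_le σ⁻¹ (v+1))]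
      have hfirst : (if v + 1 ≤ wrd σ (wrd σ⁻¹ (v+1)) then (1:ℤ) else 0) = 1 := by
        rcases Nat.lt_or_ge v (M+1) with h | h
        · rw [wrd_wrd_inv σ (by omega) (by omega)]
          rw [if_pos (by omega)]
        · have hvm : v = M + 1 := by omega
          subst hvm
          rw [wrd_of_gt σ⁻¹ (by omega : M + 1 < M + 2), wrd_zero σ]
          rw [if_pos (by omega)]
      have hsecond : (if v + 1 ≤ wrd σ (wrd σ⁻¹ v) then (1:ℤ) else 0) = 0 := by
        rcases Nat.eq_zero_or_pos v with rfl | h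
        · rw [wrd_zero σ⁻¹, wrd_of_gt σ (by omega : M + 1 < M + 2)]
          rw [if_neg (by omega)]
        · rw [wrd_wrd_inv σ (by omega) (by omega)]
          rw [if_neg (by omega)]
      rw [hfirst, hsecond]
      ring
    rw [Finset.sum_congr rfl hinner, Finset.sum_const, Finset.card_range]
    push_cast
    ring
  rw [hS1, hS2, hS3, hS4]
  ring

lemma ins_bijective {M : ℕ} :
    Function.Bijective (fun x : Equiv.Perm (Fin M) × Fin (M+1) × Fin (M+1) =>
      (ins x.1 x.2.1 x.2.2, x.2.1)) := by
  rw [Fintype.bijective_iff_injective_and_card]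
  constructor
  · rintro ⟨σ, p, v⟩ ⟨σ', p', v'⟩ h
    simp only [Prod.mk.injEq] at h
    obtain ⟨hins, hp⟩ := h
    subst hp
    have hv : v = v' := by
      rw [← ins_apply_self σ p v, ← ins_apply_self σ' p v', hins]
    subst hv
    have hσ : σ = σ' := by
      ext i
      have h2 := DFunLike.congr_fun hins (p.succAbove i)
      rw [ins_apply_succAbove, ins_apply_succAbove] at h2
      have := Fin.succAbove_right_injective (p := v) h2
      rw [this]
    rw [hσ]
  · simp only [Fintype.card_prod, Fintype.card_perm, Fintype.card_fin]
    rw [Nat.factorial_succ]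
    ring

lemma des_le {M : ℕ} (σ : Equiv.Perm (Fin (M+1))) : des σ ≤ M := by
  have h := des_add_two σ
  have hb : ∑ x ∈ Finset.range (M+2), (if wrd σ (x+1) < wrd σ x then 1 else 0)
      ≤ ∑ _x ∈ Finset.range (M+2), 1 :=
    Finset.sum_le_sum fun i _ => by split_ifs <;> omega
  rw [Finset.sum_const, Finset.card_range, smul_eq_mul, mul_one] at hb
  omega

lemma monomial_ins {M : ℕ} (σ : Equiv.Perm (Fin (M+1))) (p v : Fin (M+2)) :
    X 0 ^ (des (ins σ p v)⁻¹ + 1) * X 1 ^ (des (ins σ p v) + 1)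
      * X 2 ^ (M + 2 - des (ins σ p v)⁻¹) * X 3 ^ (M + 2 - des (ins σ p v))
    = (X 0 ^ (des σ⁻¹ + 1) * X 1 ^ (des σ + 1)
        * X 2 ^ (M + 1 - des σ⁻¹) * X 3 ^ (M + 1 - des σ))
      * (((dd σ⁻¹ (v:ℕ) (p:ℕ) : ℤ) : MvPolynomial (Fin 4) ℤ) * X 0
          + (1 - ((dd σ⁻¹ (v:ℕ) (p:ℕ) : ℤ) : MvPolynomial (Fin 4) ℤ)) * X 2)
      * (((dd σ (p:ℕ) (v:ℕ) : ℤ) : MvPolynomial (Fin 4) ℤ) * X 1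
          + (1 - ((dd σ (p:ℕ) (v:ℕ) : ℤ) : MvPolynomial (Fin 4) ℤ)) * X 3) := by
  have ha := des_le σ⁻¹
  have hb := des_le σ
  have hd : (des (ins σ p v) : ℤ) = des σ + dd σ (p:ℕ) (v:ℕ) := des_ins σ p v
  have hi : (des (ins σ p v)⁻¹ : ℤ) = des σ⁻¹ + dd σ⁻¹ (v:ℕ) (p:ℕ) := by
    rw [ins_inv]; exact des_ins σ⁻¹ v p
  rcases dd_mem σ (p:ℕ) (v:ℕ) with h | h <;> rcases dd_mem σ⁻¹ (v:ℕ) (p:ℕ) with h' | h' <;>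
    rw [h] at hd <;> rw [h'] at hi <;> rw [h, h']
  · have e1 : des (ins σ p v) = des σ := by omega
    have e2 : des (ins σ p v)⁻¹ = des σ⁻¹ := by omega
    rw [e1, e2, show M + 2 - des σ⁻¹ = (M + 1 - des σ⁻¹) + 1 by omega,
      show M + 2 - des σ = (M + 1 - des σ) + 1 by omega]
    push_cast
    ring
  · have e1 : des (ins σ p v) = des σ := by omega
    have e2 : des (ins σ p v)⁻¹ = des σ⁻¹ + 1 := by omega
    rw [e1, e2, show M + 2 - (des σ⁻¹ + 1) = M + 1 - des σ⁻¹ by omega,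
      show M + 2 - des σ = (M + 1 - des σ) + 1 by omega,
      show des σ⁻¹ + 1 + 1 = (des σ⁻¹ + 1) + 1 from rfl]
    push_cast
    ring
  · have e1 : des (ins σ p v) = des σ + 1 := by omega
    have e2 : des (ins σ p v)⁻¹ = des σ⁻¹ := by omega
    rw [e1, e2, show M + 2 - des σ⁻¹ = (M + 1 - des σ⁻¹) + 1 by omega,
      show M + 2 - (des σ + 1) = M + 1 - des σ by omega]
    push_cast
    ring
  · have e1 : des (ins σ p v) = des σ + 1 := by omega
    have e2 : des (ins σ p v)⁻¹ = des σ⁻¹ + 1 := by omega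
    rw [e1, e2, show M + 2 - (des σ⁻¹ + 1) = M + 1 - des σ⁻¹ by omega,
      show M + 2 - (des σ + 1) = M + 1 - des σ by omega]
    push_cast
    ring

set_option maxHeartbeats 1600000 in
lemma per_sigma {M : ℕ} (σ : Equiv.Perm (Fin (M+1))) :
    (∑ p : Fin (M+2), ∑ v : Fin (M+2),
      X 0 ^ (des (ins σ p v)⁻¹ + 1) * X 1 ^ (des (ins σ p v) + 1)
        * X 2 ^ (M + 2 - des (ins σ p v)⁻¹) * X 3 ^ (M + 2 - des (ins σ p v))
        : MvPolynomial (Fin 4) ℤ)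
    = ((M + 1 : ℕ) : MvPolynomial (Fin 4) ℤ) * (X 0 - X 2) * (X 1 - X 3)
        * (X 0 ^ (des σ⁻¹ + 1) * X 1 ^ (des σ + 1)
            * X 2 ^ (M + 1 - des σ⁻¹) * X 3 ^ (M + 1 - des σ))
      + X 0 * X 1 * X 2 * X 3 *
        (pderiv 0 (pderiv 1 (X 0 ^ (des σ⁻¹ + 1) * X 1 ^ (des σ + 1)
            * X 2 ^ (M + 1 - des σ⁻¹) * X 3 ^ (M + 1 - des σ))
          + pderiv 3 (X 0 ^ (des σ⁻¹ + 1) * X 1 ^ (des σ + 1)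
            * X 2 ^ (M + 1 - des σ⁻¹) * X 3 ^ (M + 1 - des σ)))
        + pderiv 2 (pderiv 1 (X 0 ^ (des σ⁻¹ + 1) * X 1 ^ (des σ + 1)
            * X 2 ^ (M + 1 - des σ⁻¹) * X 3 ^ (M + 1 - des σ))
          + pderiv 3 (X 0 ^ (des σ⁻¹ + 1) * X 1 ^ (des σ + 1)
            * X 2 ^ (M + 1 - des σ⁻¹) * X 3 ^ (M + 1 - des σ)))) := by
  obtain ⟨a2, ea, ea'⟩ : ∃ a2, M + 1 - des σ⁻¹ = a2 + 1 ∧ des σ⁻¹ + a2 = M :=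
    ⟨M - des σ⁻¹, by have := des_le σ⁻¹; omega, by have := des_le σ⁻¹; omega⟩
  obtain ⟨b2, eb, eb'⟩ : ∃ b2, M + 1 - des σ = b2 + 1 ∧ des σ + b2 = M :=
    ⟨M - des σ, by have := des_le σ; omega, by have := des_le σ; omega⟩
  set G : ℕ → ℕ → MvPolynomial (Fin 4) ℤ := fun p v =>
    ((dd σ p v * dd σ⁻¹ v p : ℤ) : MvPolynomial (Fin 4) ℤ)
        * (X 0 * X 1 - X 2 * X 1 - X 0 * X 3 + X 2 * X 3)
      + ((dd σ p v : ℤ) : MvPolynomial (Fin 4) ℤ) * (X 2 * X 1 - X 2 * X 3)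
      + ((dd σ⁻¹ v p : ℤ) : MvPolynomial (Fin 4) ℤ) * (X 0 * X 3 - X 2 * X 3)
      + X 2 * X 3 with hG
  set B : MvPolynomial (Fin 4) ℤ := X 0 ^ (des σ⁻¹ + 1) * X 1 ^ (des σ + 1)
      * X 2 ^ (M + 1 - des σ⁻¹) * X 3 ^ (M + 1 - des σ) with hBdef
  have key : ∀ p v : Fin (M+2),
      (X 0 ^ (des (ins σ p v)⁻¹ + 1) * X 1 ^ (des (ins σ p v) + 1)
        * X 2 ^ (M + 2 - des (ins σ p v)⁻¹) * X 3 ^ (M + 2 - des (ins σ p v))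
        : MvPolynomial (Fin 4) ℤ) = B * G (p:ℕ) (v:ℕ) := by
    intro p v
    rw [monomial_ins σ p v, hG]
    simp only
    push_cast
    ring
  have t1 : (∑ p : Fin (M+2), ∑ v : Fin (M+2),
      X 0 ^ (des (ins σ p v)⁻¹ + 1) * X 1 ^ (des (ins σ p v) + 1)
        * X 2 ^ (M + 2 - des (ins σ p v)⁻¹) * X 3 ^ (M + 2 - des (ins σ p v))
        : MvPolynomial (Fin 4) ℤ)
      = ∑ p ∈ Finset.range (M+2), ∑ v ∈ Finset.range (M+2), B * G p v := by
    rw [← Fin.sum_univ_eq_sum_range (fun p => ∑ v ∈ Finset.range (M+2), B * G p v) (M+2)]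
    refine Finset.sum_congr rfl fun p _ => ?_
    rw [← Fin.sum_univ_eq_sum_range (fun v => B * G (p:ℕ) v) (M+2)]
    exact Finset.sum_congr rfl fun v _ => key p v
  rw [t1]
  -- pull out B and split the sum
  simp only [← Finset.mul_sum]
  have t2 : ∑ p ∈ Finset.range (M+2), ∑ v ∈ Finset.range (M+2), G p v
      = ((((M+1) - (des σ : ℤ)) * ((M+1) - (des σ⁻¹ : ℤ)) + (M+1) : ℤ)
            : MvPolynomial (Fin 4) ℤ)
          * (X 0 * X 1 - X 2 * X 1 - X 0 * X 3 + X 2 * X 3)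
        + (((M+2) * ((M+1) - (des σ : ℤ)) : ℤ) : MvPolynomial (Fin 4) ℤ)
          * (X 2 * X 1 - X 2 * X 3)
        + (((M+2) * ((M+1) - (des σ⁻¹ : ℤ)) : ℤ) : MvPolynomial (Fin 4) ℤ)
          * (X 0 * X 3 - X 2 * X 3)
        + (((M+2) * (M+2) : ℕ) : MvPolynomial (Fin 4) ℤ) * (X 2 * X 3) := by
    rw [hG]
    simp only [Finset.sum_add_distrib, ← Finset.sum_mul]
    have z1 : ∑ p ∈ Finset.range (M+2), ∑ v ∈ Finset.range (M+2),
        ((dd σ p v * dd σ⁻¹ v p : ℤ) : MvPolynomial (Fin 4) ℤ)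
        = ((((M+1) - (des σ : ℤ)) * ((M+1) - (des σ⁻¹ : ℤ)) + (M+1) : ℤ)
            : MvPolynomial (Fin 4) ℤ) := by
      rw [← sum_dd_mul σ]
      push_cast
      rfl
    have z2 : ∑ p ∈ Finset.range (M+2), ∑ v ∈ Finset.range (M+2),
        ((dd σ p v : ℤ) : MvPolynomial (Fin 4) ℤ)
        = (((M+2) * ((M+1) - (des σ : ℤ)) : ℤ) : MvPolynomial (Fin 4) ℤ) := by
      rw [← sum_dd σ]
      push_cast
      rfl
    have z3 : ∑ p ∈ Finset.range (M+2), ∑ v ∈ Finset.range (M+2),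
        ((dd σ⁻¹ v p : ℤ) : MvPolynomial (Fin 4) ℤ)
        = (((M+2) * ((M+1) - (des σ⁻¹ : ℤ)) : ℤ) : MvPolynomial (Fin 4) ℤ) := by
      rw [← sum_dd σ⁻¹, Finset.sum_comm]
      push_cast
      rfl
    rw [z1, z2, z3]
    simp only [Finset.sum_const, Finset.card_range, smul_smul, nsmul_eq_mul]
    push_cast
    ring
  rw [t2]
  -- compute the derivatives
  have hBexp : B = X 0 ^ (des σ⁻¹ + 1) * X 1 ^ (des σ + 1) * X 2 ^ (a2+1) * X 3 ^ (b2+1) := by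
    rw [hBdef, ea, eb]
  rw [hBexp]
  simp only [map_add, pderiv_mul, pderiv_pow, pderiv_X_self, Nat.add_sub_cancel,
    Derivation.map_natCast, Derivation.map_one_eq_zero, mul_zero, zero_mul, add_zero, zero_add,
    pderiv_X_of_ne (show (0:Fin 4) ≠ 1 by decide),
    pderiv_X_of_ne (show (2:Fin 4) ≠ 1 by decide),
    pderiv_X_of_ne (show (3:Fin 4) ≠ 1 by decide),
    pderiv_X_of_ne (show (0:Fin 4) ≠ 3 by decide),
    pderiv_X_of_ne (show (1:Fin 4) ≠ 3 by decide),
    pderiv_X_of_ne (show (2:Fin 4) ≠ 3 by decide),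
    pderiv_X_of_ne (show (1:Fin 4) ≠ 0 by decide),
    pderiv_X_of_ne (show (2:Fin 4) ≠ 0 by decide),
    pderiv_X_of_ne (show (3:Fin 4) ≠ 0 by decide),
    pderiv_X_of_ne (show (0:Fin 4) ≠ 2 by decide),
    pderiv_X_of_ne (show (1:Fin 4) ≠ 2 by decide),
    pderiv_X_of_ne (show (3:Fin 4) ≠ 2 by decide)]
  push_cast
  have hMP : ((M : ℕ) : MvPolynomial (Fin 4) ℤ)
      = ((des σ⁻¹ : ℕ) : MvPolynomial (Fin 4) ℤ) + ((a2 : ℕ) : MvPolynomial (Fin 4) ℤ) := by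
    exact_mod_cast congrArg (fun k : ℕ => ((k : ℕ) : MvPolynomial (Fin 4) ℤ)) ea'.symm
  have hb2P : ((b2 : ℕ) : MvPolynomial (Fin 4) ℤ)
      = ((des σ⁻¹ : ℕ) : MvPolynomial (Fin 4) ℤ) + ((a2 : ℕ) : MvPolynomial (Fin 4) ℤ)
        - ((des σ : ℕ) : MvPolynomial (Fin 4) ℤ) := by
    have hz : (b2 : ℤ) = (des σ⁻¹ : ℤ) + (a2 : ℤ) - (des σ : ℤ) := by omega
    have := congrArg (fun z : ℤ => (z : MvPolynomial (Fin 4) ℤ)) hz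
    push_cast at this
    exact_mod_cast this
  rw [hMP, hb2P]
  ring

set_option maxHeartbeats 800000 in
lemma sum_ins {M : ℕ} (f : Equiv.Perm (Fin (M+2)) → MvPolynomial (Fin 4) ℤ) :
    ((M + 2 : ℕ) : MvPolynomial (Fin 4) ℤ) * ∑ π : Equiv.Perm (Fin (M+2)), f π
      = ∑ σ : Equiv.Perm (Fin (M+1)), ∑ p : Fin (M+2), ∑ v : Fin (M+2), f (ins σ p v) := by
  rw [Finset.mul_sum]
  calc ∑ π : Equiv.Perm (Fin (M+2)), ((M + 2 : ℕ) : MvPolynomial (Fin 4) ℤ) * f π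
      = ∑ π : Equiv.Perm (Fin (M+2)), ∑ _r : Fin (M+2), f π := by
        refine Finset.sum_congr rfl fun π _ => ?_
        rw [Finset.sum_const, Finset.card_univ, Fintype.card_fin, nsmul_eq_mul]
    _ = ∑ x : Equiv.Perm (Fin (M+2)) × Fin (M+2), f x.1 :=
        (Fintype.sum_prod_type (fun x : Equiv.Perm (Fin (M+2)) × Fin (M+2) => f x.1)).symm
    _ = ∑ x : Equiv.Perm (Fin (M+1)) × Fin (M+2) × Fin (M+2), f (ins x.1 x.2.1 x.2.2) :=
        (Fintype.sum_bijective _ (ins_bijective (M := M + 1)) _ _ (fun x => rfl)).symm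
    _ = ∑ σ : Equiv.Perm (Fin (M+1)), ∑ y : Fin (M+2) × Fin (M+2), f (ins σ y.1 y.2) :=
        Fintype.sum_prod_type
          (fun x : Equiv.Perm (Fin (M+1)) × Fin (M+2) × Fin (M+2) => f (ins x.1 x.2.1 x.2.2))
    _ = ∑ σ : Equiv.Perm (Fin (M+1)), ∑ p : Fin (M+2), ∑ v : Fin (M+2), f (ins σ p v) :=
        Finset.sum_congr rfl fun σ _ =>
          Fintype.sum_prod_type (fun y : Fin (M+2) × Fin (M+2) => f (ins σ y.1 y.2))

end FVE

open FVE

set_option maxHeartbeats 1600000 in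
theorem stmt_9 :
    fourVarEulerian 1 = X 0 * X 1 * X 2 * X 3 ∧
    ∀ n : ℕ, 2 ≤ n →
      (n : MvPolynomial (Fin 4) ℤ) * fourVarEulerian n =
        ((n : MvPolynomial (Fin 4) ℤ) - 1) * (X 0 - X 2) * (X 1 - X 3) *
            fourVarEulerian (n - 1) +
          X 0 * X 1 * X 2 * X 3 *
            (pderiv 0 (pderiv 1 (fourVarEulerian (n - 1)) + pderiv 3 (fourVarEulerian (n - 1))) +
             pderiv 2 (pderiv 1 (fourVarEulerian (n - 1)) + pderiv 3 (fourVarEulerian (n - 1)))) := by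
  constructor
  · rw [fourVarEulerian]
    have huniv : (Finset.univ : Finset (Equiv.Perm (Fin 1))) = {1} := by
      ext π
      simp only [Finset.mem_univ, Finset.mem_singleton, true_iff]
      exact Equiv.ext fun i => Subsingleton.elim _ _
    rw [huniv, Finset.sum_singleton]
    have hdes : des (1 : Equiv.Perm (Fin 1)) = 0 := by
      rw [des, Finset.filter_false_of_mem, Finset.card_empty]
      exact fun i _ h => absurd h.1 (by omega)
    rw [inv_one, hdes]
    norm_num
  · intro n hn
    obtain ⟨k, rfl⟩ : ∃ k, n = k + 2 := ⟨n - 2, by omega⟩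
    rw [show k + 2 - 1 = k + 1 from rfl]
    rw [fourVarEulerian]
    rw [sum_ins (M := k)]
    refine Eq.trans (Finset.sum_congr rfl fun σ _ => per_sigma (M := k) σ) ?_
    have hc : ((k + 2 : ℕ) : MvPolynomial (Fin 4) ℤ) - 1
        = ((k + 1 : ℕ) : MvPolynomial (Fin 4) ℤ) := by
      push_cast
      ring
    rw [hc, fourVarEulerian]
    rw [map_sum (pderiv 1), map_sum (pderiv 3), ← Finset.sum_add_distrib,
      map_sum (pderiv 0), map_sum (pderiv 2), ← Finset.sum_add_distrib,
      Finset.mul_sum, Finset.mul_sum, ← Finset.sum_add_distrib]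
end

section
/- For n ≥ 1: (n+1)·A_n(s,t) = Σ_{π ∈ S_{n+1}} s^{cdes(π^{-1})} t^{cdes(π)}. -/
open MvPolynomial
open Fin.NatCast

/-- Number of cyclic descents of a permutation of `Fin n`. -/
def cdes {n : ℕ} (π : Equiv.Perm (Fin n)) : ℕ :=
  (Finset.univ.filter fun i : Fin n => π (finRotate n i) < π i).card

/-- The two-sided Eulerian polynomial `A_n(s,t)`, with `s = X 0`, `t = X 1`. -/
noncomputable def twoSidedEulerian (n : ℕ) : MvPolynomial (Fin 2) ℤ :=
  ∑ π : Equiv.Perm (Fin n), X 0 ^ (des π⁻¹ + 1) * X 1 ^ (des π + 1)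

lemma cdes_eq_sum {m : ℕ} (σ : Equiv.Perm (Fin m)) :
    cdes σ = ∑ i : Fin m, if σ (finRotate m i) < σ i then 1 else 0 :=
  Finset.card_filter _ _

lemma des_eq_sum {m : ℕ} (σ : Equiv.Perm (Fin m)) :
    des σ = ∑ i : Fin m, if (i : ℕ) + 1 < m ∧ σ (finRotate m i) < σ i then 1 else 0 :=
  Finset.card_filter _ _

lemma key_shift {m : ℕ} (a b : Fin (m+1)) :
    ((if a+1 < b+1 then 1 else 0) + (if b = Fin.last m then 1 else 0) : ℕ)
      = (if a < b then 1 else 0) + (if a = Fin.last m then 1 else 0) := by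
  by_cases ha : a = Fin.last m <;> by_cases hb : b = Fin.last m
  · subst ha; subst hb; simp
  · subst ha
    have h1 : Fin.last m + 1 = 0 := Fin.last_add_one m
    have h2 : (0 : Fin (m+1)) < b + 1 := by
      apply Fin.pos_of_ne_zero
      intro h; apply hb
      have h4 : b + 1 = Fin.last m + 1 := by rw [h, h1]
      exact add_right_cancel h4
    have h3 : ¬ (Fin.last m < b) := by
      simp [Fin.lt_iff_val_lt_val, Fin.val_last]; omega
    simp [h1, h2, h3, hb]
  · subst hb
    have h1 : Fin.last m + 1 = 0 := Fin.last_add_one m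
    have h2 : ¬ (a + 1 < (0 : Fin (m+1))) := by simp
    have h3 : a < Fin.last m := Fin.lt_last_iff_ne_last.mpr ha
    simp [h1, h2, h3, ha]
  · have ha' : a < Fin.last m := Fin.lt_last_iff_ne_last.mpr ha
    have hb' : b < Fin.last m := Fin.lt_last_iff_ne_last.mpr hb
    have h1 : (↑(a+1) : ℕ) = a + 1 := Fin.val_add_one_of_lt ha'
    have h2 : (↑(b+1) : ℕ) = b + 1 := Fin.val_add_one_of_lt hb'
    simp only [Fin.lt_iff_val_lt_val, h1, h2, ha, hb]
    simp only [if_false]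
    congr 1
    simp [Nat.succ_lt_succ_iff]

lemma sum_eq_last {m : ℕ} {α : Type*} [Fintype α] (e : α ≃ Fin (m+1)) :
    (∑ i : α, if e i = Fin.last m then 1 else 0) = 1 := by
  rw [Equiv.sum_comp e (fun j => if j = Fin.last m then (1:ℕ) else 0)]
  simp

lemma cdes_rot_mul {m : ℕ} (σ : Equiv.Perm (Fin (m+1))) :
    cdes (finRotate (m+1) * σ) = cdes σ := by
  have h : ∀ i : Fin (m+1),
      ((if (finRotate (m+1) * σ) (finRotate (m+1) i) < (finRotate (m+1) * σ) i then 1 else 0)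
        + (if σ i = Fin.last m then 1 else 0) : ℕ)
      = (if σ (finRotate (m+1) i) < σ i then 1 else 0)
        + (if σ (finRotate (m+1) i) = Fin.last m then 1 else 0) := by
    intro i
    simp only [Equiv.Perm.mul_apply, finRotate_succ_apply]
    exact key_shift (σ (i + 1)) (σ i)
  have hsum := Finset.sum_congr rfl (fun i (_ : i ∈ Finset.univ) => h i)
  rw [Finset.sum_add_distrib, Finset.sum_add_distrib] at hsum
  rw [sum_eq_last (σ : Fin (m+1) ≃ Fin (m+1))] at hsum
  have h2 : (∑ x : Fin (m+1), if σ (finRotate (m+1) x) = Fin.last m then 1 else 0) = 1 := by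
    have := sum_eq_last ((finRotate (m+1)).trans σ)
    simpa [Equiv.trans_apply] using this
  rw [h2] at hsum
  rw [cdes_eq_sum, cdes_eq_sum]
  omega

lemma cdes_mul_rot {m : ℕ} (σ : Equiv.Perm (Fin m)) :
    cdes (σ * finRotate m) = cdes σ := by
  rw [cdes_eq_sum, cdes_eq_sum]
  rw [← Equiv.sum_comp (finRotate m) (fun j => if σ (finRotate m j) < σ j then (1:ℕ) else 0)]
  simp [Equiv.Perm.mul_apply]

lemma cdes_rotpow_mul {m : ℕ} (k : ℕ) (σ : Equiv.Perm (Fin (m+1))) :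
    cdes ((finRotate (m+1))^k * σ) = cdes σ := by
  induction k with
  | zero => simp
  | succ k ih =>
    rw [pow_succ', mul_assoc, cdes_rot_mul, ih]

lemma cdes_mul_rot_inv {m : ℕ} (σ : Equiv.Perm (Fin m)) :
    cdes (σ * (finRotate m)⁻¹) = cdes σ := by
  have h := cdes_mul_rot (σ * (finRotate m)⁻¹)
  rw [mul_assoc, inv_mul_cancel, mul_one] at h
  exact h.symm

lemma cdes_mul_rotinvpow {m : ℕ} (k : ℕ) (σ : Equiv.Perm (Fin m)) :
    cdes (σ * ((finRotate m)⁻¹)^k) = cdes σ := by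
  induction k with
  | zero => simp
  | succ k ih =>
    rw [pow_succ, ← mul_assoc, cdes_mul_rot_inv, ih]

def emb {n : ℕ} (π : Equiv.Perm (Fin n)) : Equiv.Perm (Fin (n+1)) where
  toFun := Fin.lastCases (Fin.last n) (fun j => (π j).castSucc)
  invFun := Fin.lastCases (Fin.last n) (fun j => (π⁻¹ j).castSucc)
  left_inv i := by cases i using Fin.lastCases <;> simp
  right_inv i := by cases i using Fin.lastCases <;> simp

lemma emb_castSucc {n : ℕ} (π : Equiv.Perm (Fin n)) (j : Fin n) :
    emb π j.castSucc = (π j).castSucc := by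
  show (Fin.lastCases (Fin.last n) (fun j => (π j).castSucc) j.castSucc : Fin (n+1)) = _
  rw [Fin.lastCases_castSucc]

lemma emb_last {n : ℕ} (π : Equiv.Perm (Fin n)) :
    emb π (Fin.last n) = Fin.last n := by
  show (Fin.lastCases (Fin.last n) (fun j => (π j).castSucc) (Fin.last n) : Fin (n+1)) = _
  rw [Fin.lastCases_last]

lemma emb_inv {n : ℕ} (π : Equiv.Perm (Fin n)) : (emb π)⁻¹ = emb π⁻¹ := by
  apply Equiv.ext
  intro i
  rfl

lemma cdes_emb {m : ℕ} (π : Equiv.Perm (Fin (m+1))) : cdes (emb π) = des π + 1 := by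
  rw [cdes_eq_sum, des_eq_sum]
  rw [Fin.sum_univ_castSucc (f := fun i => if emb π (finRotate (m+2) i) < emb π i then 1 else 0)]
  congr 1
  · apply Finset.sum_congr rfl
    intro j _
    have hrot : finRotate (m+2) j.castSucc = j.succ := by
      rw [finRotate_succ_apply, Fin.coeSucc_eq_succ]
    rw [hrot]
    by_cases hj : j = Fin.last m
    · subst hj
      rw [Fin.succ_last, emb_last, emb_castSucc]
      have h1 : ¬ (Fin.last (m+1) < (π (Fin.last m)).castSucc) :=
        not_lt.mpr (Fin.castSucc_lt_last _).le
      have h2 : ¬ ((Fin.last m : ℕ) + 1 < m + 1) := by simp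
      simp [h1, h2]
    · have hj' : j < Fin.last m := Fin.lt_last_iff_ne_last.mpr hj
      have hsucc : j.succ = (j+1).castSucc := by
        apply Fin.ext
        simp [Fin.val_succ, Fin.val_add_one_of_lt hj']
      rw [hsucc, emb_castSucc, emb_castSucc]
      have hlt : (j:ℕ) + 1 < m + 1 := by
        have := hj'
        simp only [Fin.lt_iff_val_lt_val, Fin.val_last] at this
        omega
      have hfr : finRotate (m+1) j = j + 1 := finRotate_succ_apply j
      rw [hfr]
      simp [Fin.castSucc_lt_castSucc_iff, hlt]
  · have h0 : finRotate (m+2) (Fin.last (m+1)) = 0 := by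
      rw [finRotate_succ_apply, Fin.last_add_one]
    rw [h0, emb_last]
    have h3 : emb π 0 = (π 0).castSucc := by
      have := emb_castSucc π 0
      rwa [Fin.castSucc_zero] at this
    rw [h3]
    simp [Fin.castSucc_lt_last]

lemma rot_pow_apply {m : ℕ} (k : ℕ) (i : Fin (m+1)) :
    ((finRotate (m+1))^k) i = i + (k : Fin (m+1)) := by
  induction k with
  | zero => simp
  | succ k ih =>
    rw [pow_succ', Equiv.Perm.mul_apply, finRotate_succ_apply, ih]
    push_cast
    rw [add_assoc]

lemma emb_injective {n : ℕ} : Function.Injective (emb (n := n)) := by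
  intro π π' h
  apply Equiv.ext
  intro j
  have := DFunLike.congr_fun h j.castSucc
  rw [emb_castSucc, emb_castSucc] at this
  exact Fin.castSucc_injective _ this

/-- `(n+1)·A_n(s,t) = Σ_{π ∈ S_{n+1}} s^(cdes π⁻¹) t^(cdes π)`. -/
theorem stmt_17 (n : ℕ) (hn : 1 ≤ n) :
    ((n : MvPolynomial (Fin 2) ℤ) + 1) * twoSidedEulerian n =
      ∑ π : Equiv.Perm (Fin (n + 1)), X 0 ^ cdes π⁻¹ * X 1 ^ cdes π := by
  obtain ⟨m, rfl⟩ : ∃ m, n = m + 1 := ⟨n - 1, by omega⟩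
  have hb : Function.Bijective (fun p : Fin (m+2) × Equiv.Perm (Fin (m+1)) =>
      (finRotate (m+2))^((p.1 : ℕ)) * emb p.2) := by
    rw [Fintype.bijective_iff_injective_and_card]
    constructor
    · rintro ⟨k, π⟩ ⟨k', π'⟩ h
      simp only at h
      have hl := DFunLike.congr_fun h (Fin.last (m+1))
      simp only [Equiv.Perm.mul_apply, emb_last] at hl
      rw [rot_pow_apply, rot_pow_apply] at hl
      have hk : k = k' := by
        have h5 := add_left_cancel hl
        rwa [Fin.cast_val_eq_self, Fin.cast_val_eq_self] at h5
      subst hk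
      have hπ : π = π' := emb_injective (mul_left_cancel h)
      rw [hπ]
    · simp [Fintype.card_perm, Fintype.card_fin, Nat.factorial_succ]
  have hsum : (∑ σ : Equiv.Perm (Fin (m+1+1)),
        (X 0 : MvPolynomial (Fin 2) ℤ) ^ cdes σ⁻¹ * X 1 ^ cdes σ)
      = ∑ p : Fin (m+2) × Equiv.Perm (Fin (m+1)),
        (X 0 : MvPolynomial (Fin 2) ℤ) ^ (des p.2⁻¹ + 1) * X 1 ^ (des p.2 + 1) := by
    refine (Fintype.sum_bijective _ hb _ _ ?_).symm
    rintro ⟨k, π⟩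
    simp only
    have h1 : cdes ((finRotate (m+2))^(k:ℕ) * emb π) = des π + 1 := by
      rw [cdes_rotpow_mul, cdes_emb]
    have h2 : cdes (((finRotate (m+2))^(k:ℕ) * emb π)⁻¹) = des π⁻¹ + 1 := by
      rw [mul_inv_rev, emb_inv, ← inv_pow, cdes_mul_rotinvpow, cdes_emb]
    rw [h1, h2]
  rw [hsum, Fintype.sum_prod_type]
  have h7 : (∑ x : Fin (m+2), ∑ y : Equiv.Perm (Fin (m+1)),
      (X 0 : MvPolynomial (Fin 2) ℤ) ^ (des ((x, y) : Fin (m+2) × Equiv.Perm (Fin (m+1))).2⁻¹ + 1)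
        * X 1 ^ (des ((x, y) : Fin (m+2) × Equiv.Perm (Fin (m+1))).2 + 1))
      = ∑ _x : Fin (m+2), twoSidedEulerian (m+1) := rfl
  rw [h7, Finset.sum_const, Finset.card_univ, Fintype.card_fin, nsmul_eq_mul]
  push_cast
  ring
end

section
/- For every n ≥ 1, A_n(x) = Σ_{e ∈ I_n} x^{dst(e)}, where the sum runs over all inversion sequences of length n; i.e., the statistic dst counting distinct entries of an inversion sequence is Eulerian. -/
/-- An inversion sequence of length `n` is `e = (e_1,…,e_n)` with `0 ≤ e_i ≤ i-1`;
here `e i : Fin (i+1)` for a 0-indexed `i : Fin n`. -/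
abbrev InvSeq (n : ℕ) := ∀ i : Fin n, Fin ((i : ℕ) + 1)

/-- The number of distinct entries of an inversion sequence. -/
def dst {n : ℕ} (e : InvSeq n) : ℕ :=
  (Finset.univ.image fun i : Fin n => ((e i : ℕ))).card

namespace DumontAux

open Finset Equiv

variable {n : ℕ}

/-- The word of a permutation, as a function `ℕ → ℕ`, with default value `n`
outside the range. -/
def W (σ : Perm (Fin n)) (i : ℕ) : ℕ := if h : i < n then (σ ⟨i, h⟩ : ℕ) else n

lemma W_lt (σ : Perm (Fin n)) {i : ℕ} (h : i < n) : W σ i < n := by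
  simp only [W, dif_pos h]
  exact (σ ⟨i, h⟩).isLt

lemma W_of_ge (σ : Perm (Fin n)) {i : ℕ} (h : n ≤ i) : W σ i = n :=
  dif_neg (not_lt.2 h)

lemma W_le (σ : Perm (Fin n)) (i : ℕ) : W σ i ≤ n := by
  rcases lt_or_ge i n with h | h
  · exact (W_lt σ h).le
  · rw [W_of_ge σ h]

/-- Descent indicator of the word of `σ` at position `i`. -/
def DI (σ : Perm (Fin n)) (i : ℕ) : ℕ := if W σ (i+1) < W σ i then 1 else 0

lemma DI_le_one (σ : Perm (Fin n)) (i : ℕ) : DI σ i ≤ 1 := by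
  unfold DI; split <;> omega

lemma DI_eq_zero_of_ge (σ : Perm (Fin n)) {i : ℕ} (h : n ≤ i + 1) : DI σ i = 0 := by
  unfold DI
  rw [W_of_ge σ h, if_neg (not_lt.2 (W_le σ i))]

lemma succ_lt_of_DI_eq_one (σ : Perm (Fin n)) {i : ℕ} (h : DI σ i = 1) : i + 1 < n := by
  by_contra hc
  rw [DI_eq_zero_of_ge σ (not_lt.1 hc)] at h
  omega

lemma des_eq_sum (σ : Perm (Fin n)) {N : ℕ} (hN : n ≤ N + 1) :
    des σ = ∑ i ∈ range N, DI σ i := by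
  have key : des σ = ∑ i ∈ range n, DI σ i := by
    rw [des, card_filter, ← Fin.sum_univ_eq_sum_range (fun i => DI σ i)]
    refine Finset.sum_congr rfl fun i _ => ?_
    by_cases h : (i : ℕ) + 1 < n
    · rcases n with _ | m
      · exact absurd i.isLt (by omega)
      have hrot : finRotate (m+1) i = ⟨(i : ℕ) + 1, h⟩ := by
        rw [finRotate_succ_apply]
        apply Fin.ext
        rw [Fin.val_add_one_of_lt]
        exact Fin.lt_iff_val_lt_val.2 (by simp; omega)
      have hWi : W σ (i : ℕ) = (σ i : ℕ) := by
        simp only [W, dif_pos i.isLt, Fin.eta]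
      have hWi1 : W σ ((i : ℕ) + 1) = (σ ⟨(i : ℕ) + 1, h⟩ : ℕ) := by
        simp only [W, dif_pos h]
      unfold DI
      rw [hWi, hWi1, hrot]
      simp only [h, true_and, Fin.lt_def]
    · rw [if_neg (by tauto)]
      exact (DI_eq_zero_of_ge σ (not_lt.1 h)).symm
  rw [key]
  rcases le_total n N with h | h
  · exact Finset.sum_subset (Finset.range_subset_range.2 h)
      (fun i _ hi => DI_eq_zero_of_ge σ (by simp at hi; omega)) 
  · have hNn : n = N ∨ n = N + 1 := by omega
    rcases hNn with rfl | rfl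
    · rfl
    · rw [Finset.sum_range_succ, DI_eq_zero_of_ge σ (le_refl _), add_zero]

/-- Insert the maximal value `n` at position `p` in the word of `σ`. -/
def ins (σ : Perm (Fin n)) (p : Fin (n+1)) : Perm (Fin (n+1)) :=
  (finSuccEquiv' p).trans (σ.optionCongr.trans (finSuccEquiv' (Fin.last n)).symm)

lemma ins_self (σ : Perm (Fin n)) (p : Fin (n+1)) : ins σ p p = Fin.last n := by
  simp [ins, finSuccEquiv'_at]

lemma ins_succAbove (σ : Perm (Fin n)) (p : Fin (n+1)) (j : Fin n) :
    ins σ p (p.succAbove j) = (σ j).castSucc := by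
  simp [ins, finSuccEquiv'_succAbove, finSuccEquiv'_symm_some, Fin.succAbove_last]

lemma W_ins_self (σ : Perm (Fin n)) (p : Fin (n+1)) : W (ins σ p) (p : ℕ) = n := by
  have h : (p : ℕ) < n + 1 := p.isLt
  have : (⟨(p : ℕ), h⟩ : Fin (n+1)) = p := Fin.ext rfl
  rw [W, dif_pos h, this, ins_self]
  rfl

lemma W_ins_of_lt (σ : Perm (Fin n)) (p : Fin (n+1)) {i : ℕ} (h : i < (p : ℕ)) :
    W (ins σ p) i = W σ i := by
  have hin : i < n := by have := p.isLt; omega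
  have hpos : (⟨i, by omega⟩ : Fin (n+1)) = p.succAbove ⟨i, hin⟩ := by
    rw [Fin.succAbove_of_castSucc_lt p ⟨i, hin⟩ (by simpa [Fin.lt_iff_val_lt_val])]
    rfl
  rw [W, dif_pos (show i < n + 1 by omega), hpos, ins_succAbove, W, dif_pos hin]
  rfl

lemma W_ins_of_gt (σ : Perm (Fin n)) (p : Fin (n+1)) {i : ℕ} (h : (p : ℕ) < i)
    (h2 : i ≤ n) : W (ins σ p) i = W σ (i - 1) := by
  have h1 : 1 ≤ i := by omega
  have hin : i - 1 < n := by omega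
  have hpos : (⟨i, by omega⟩ : Fin (n+1)) = p.succAbove ⟨i - 1, hin⟩ := by
    rw [Fin.succAbove_of_le_castSucc p ⟨i - 1, hin⟩ (by simp [Fin.le_iff_val_le_val]; omega)]
    apply Fin.ext
    simp [Fin.val_succ]
    omega
  rw [W, dif_pos (show i < n + 1 by omega), hpos, ins_succAbove, W, dif_pos hin]
  rfl

lemma DI_ins_of_gt (σ : Perm (Fin n)) (p : Fin (n+1)) {j : ℕ} (hj : (p : ℕ) ≤ j)
    (hjn : j < n) : DI (ins σ p) (j + 1) = DI σ j := by
  unfold DI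
  rw [W_ins_of_gt σ p (i := j + 1) (by omega) (by omega)]
  simp only [Nat.add_sub_cancel]
  by_cases h : j + 1 + 1 ≤ n
  · rw [W_ins_of_gt σ p (i := j + 1 + 1) (by omega) (by omega)]
    simp only [Nat.add_sub_cancel]
  · have hn1 : j + 1 = n := by omega
    rw [show j + 1 + 1 = n + 1 by omega, W_of_ge _ (by omega), hn1, W_of_ge σ (le_refl n),
      if_neg (by have := W_le σ j; omega :  ¬ n + 1 < W σ j),
      if_neg (by have := W_le σ j; omega : ¬ n < W σ j)]

lemma des_ins (σ : Perm (Fin n)) (p : Fin (n+1)) :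
    des (ins σ p) + (if 1 ≤ (p : ℕ) then DI σ ((p : ℕ) - 1) else 0)
      = des σ + (if (p : ℕ) < n then 1 else 0) := by
  have hp : (p : ℕ) ≤ n := by have := p.isLt; omega
  have hdes : des (ins σ p) = ∑ i ∈ range (n+1), DI (ins σ p) i :=
    des_eq_sum _ (by omega)
  have hsplit : ∑ i ∈ range (n+1), DI (ins σ p) i
      = (∑ i ∈ range (p : ℕ), DI (ins σ p) i) + DI (ins σ p) (p : ℕ)
        + ∑ i ∈ Ico ((p : ℕ) + 1) (n+1), DI (ins σ p) i := by
    rw [Finset.range_eq_Ico, ← Finset.sum_Ico_consecutive _ (Nat.zero_le (p : ℕ)) (by omega),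
      Finset.sum_eq_sum_Ico_succ_bot (by omega : (p : ℕ) < n + 1), ← Finset.range_eq_Ico]
    ring
  -- middle term
  have hmid : DI (ins σ p) (p : ℕ) = if (p : ℕ) < n then 1 else 0 := by
    unfold DI
    by_cases h : (p : ℕ) < n
    · rw [if_pos h, W_ins_of_gt σ p (i := (p : ℕ) + 1) (by omega) (by omega), W_ins_self]
      simp only [Nat.add_sub_cancel]
      rw [if_pos (W_lt σ h)]
    · have hpn : (p : ℕ) = n := by omega
      rw [if_neg h, hpn, W_of_ge (ins σ p) (i := n + 1) (by omega),
        if_neg (by have := W_le (ins σ p) n; omega)]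
  -- left part
  have hleft : (∑ i ∈ range (p : ℕ), DI (ins σ p) i)
        + (if 1 ≤ (p : ℕ) then DI σ ((p : ℕ) - 1) else 0)
      = ∑ i ∈ range (p : ℕ), DI σ i := by
    by_cases h1 : 1 ≤ (p : ℕ)
    case neg => simp [show (p : ℕ) = 0 by omega]
    · rw [if_pos h1]
      obtain ⟨q, hq⟩ : ∃ q, (p : ℕ) = q + 1 := ⟨(p : ℕ) - 1, by omega⟩
      rw [hq]
      simp only [Nat.add_sub_cancel]
      rw [Finset.sum_range_succ, Finset.sum_range_succ]
      have hDIq : DI (ins σ p) q = 0 := by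
        unfold DI
        rw [show q + 1 = (p : ℕ) from hq.symm, W_ins_self,
          W_ins_of_lt σ p (i := q) (by omega)]
        rw [if_neg (not_lt.2 (W_le σ q))]
      have heq : ∀ i ∈ range q, DI (ins σ p) i = DI σ i := by
        intro i hi
        simp only [Finset.mem_range] at hi
        unfold DI
        rw [W_ins_of_lt σ p (i := i + 1) (by omega), W_ins_of_lt σ p (i := i) (by omega)]
      rw [Finset.sum_congr rfl heq, hDIq]
      ring
  -- right part
  have hright : ∑ i ∈ Ico ((p : ℕ) + 1) (n+1), DI (ins σ p) i
      = ∑ j ∈ Ico (p : ℕ) n, DI σ j := by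
    rw [Finset.sum_Ico_eq_sum_range, Finset.sum_Ico_eq_sum_range]
    have hlen : n + 1 - ((p : ℕ) + 1) = n - (p : ℕ) := by omega
    rw [hlen]
    refine Finset.sum_congr rfl fun k hk => ?_
    simp only [Finset.mem_range] at hk
    have hpk : (p : ℕ) + 1 + k = ((p : ℕ) + k) + 1 := by omega
    rw [hpk]
    exact DI_ins_of_gt σ p (by omega) (by omega)
  have hdessig : des σ = ∑ i ∈ range n, DI σ i := des_eq_sum σ (by omega)
  have hcat : (∑ i ∈ range (p : ℕ), DI σ i) + ∑ j ∈ Ico (p : ℕ) n, DI σ j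
      = ∑ i ∈ range n, DI σ i := by
    simp only [Finset.range_eq_Ico]
    exact Finset.sum_Ico_consecutive (DI σ) (Nat.zero_le _) hp
  rw [hdes, hsplit, hmid, hdessig, ← hcat, ← hleft, ← hright]
  ring

/-- the set of "good" insertion positions (those not increasing `des`) -/
def Good (σ : Perm (Fin n)) (p' : ℕ) : Prop :=
  p' = n ∨ (1 ≤ p' ∧ DI σ (p' - 1) = 1)

instance (σ : Perm (Fin n)) : DecidablePred (Good σ) := fun _ => by
  unfold Good; infer_instance

lemma des_ins_of_good (σ : Perm (Fin n)) (p : Fin (n+1)) (h : Good σ (p : ℕ)) :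
    des (ins σ p) = des σ := by
  have key := des_ins σ p
  rcases h with h | ⟨h1, h2⟩
  · have hD : (if 1 ≤ (p : ℕ) then DI σ ((p : ℕ) - 1) else 0) = 0 := by
      split
      · exact DI_eq_zero_of_ge σ (by omega)
      · rfl
    rw [hD, if_neg (by omega)] at key
    omega
  · have hlt : (p : ℕ) < n := by
      have := succ_lt_of_DI_eq_one σ h2
      omega
    rw [if_pos h1, h2, if_pos hlt] at key
    omega

lemma des_ins_of_not_good (σ : Perm (Fin n)) (p : Fin (n+1)) (h : ¬ Good σ (p : ℕ)) :
    des (ins σ p) = des σ + 1 := by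
  have key := des_ins σ p
  unfold Good at h
  push_neg at h
  obtain ⟨hne, hor⟩ := h
  have hlt : (p : ℕ) < n := by have := p.isLt; omega
  rw [if_pos hlt] at key
  by_cases h1 : 1 ≤ (p : ℕ)
  · have : DI σ ((p : ℕ) - 1) = 0 := by
      have := hor h1
      have := DI_le_one σ ((p : ℕ) - 1)
      omega
    rw [if_pos h1, this] at key
    omega
  · rw [if_neg h1] at key
    omega

lemma des_le (σ : Perm (Fin n)) : des σ ≤ n :=
  le_trans (Finset.card_filter_le _ _) (by simp)

lemma card_good (σ : Perm (Fin n)) :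
    ((range (n+1)).filter fun p' => Good σ p').card = des σ + 1 := by
  have hD : des σ = ((range n).filter fun j => W σ (j+1) < W σ j).card := by
    rw [des_eq_sum σ (show n ≤ n + 1 by omega), card_filter]
    rfl
  have hset : ((range (n+1)).filter fun p' => Good σ p')
      = insert n (((range n).filter fun j => W σ (j+1) < W σ j).image (· + 1)) := by
    ext p'
    simp only [Finset.mem_filter, Finset.mem_range, Finset.mem_insert, Finset.mem_image]
    constructor
    · rintro ⟨hlt, h | ⟨h1, h2⟩⟩
      · exact Or.inl h
      · refine Or.inr ⟨p' - 1, ⟨?_, ?_⟩, by omega⟩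
        · have := succ_lt_of_DI_eq_one σ h2
          omega
        · have h2' := h2
          unfold DI at h2'
          split at h2' <;> [assumption; omega]
    · rintro (rfl | ⟨j, ⟨hj, hdesc⟩, rfl⟩)
      · exact ⟨by omega, Or.inl rfl⟩
      · have hj1 : j + 1 < n := by
          by_contra hc
          rw [W_of_ge σ (by omega)] at hdesc
          have := W_le σ j
          omega
        refine ⟨by omega, Or.inr ⟨by omega, ?_⟩⟩
        simp only [Nat.add_sub_cancel]
        unfold DI
        rw [if_pos hdesc]
  rw [hset, Finset.card_insert_of_notMem, Finset.card_image_of_injective _ (add_left_injective 1),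
    ← hD, add_comm]
  · rintro hmem
    simp only [Finset.mem_image, Finset.mem_filter, Finset.mem_range] at hmem
    obtain ⟨j, ⟨hj, hdesc⟩, hjn⟩ := hmem
    have : j + 1 < n := by
      by_contra hc
      rw [W_of_ge σ (by omega)] at hdesc
      have := W_le σ j
      omega
    omega

lemma sum_F_des_ins (σ : Perm (Fin n)) (F : ℕ → Polynomial ℤ) :
    ∑ p : Fin (n+1), F (des (ins σ p))
      = (des σ + 1) • F (des σ) + (n - des σ) • F (des σ + 1) := by
  have h1 : ∀ p : Fin (n+1), F (des (ins σ p))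
      = if Good σ (p : ℕ) then F (des σ) else F (des σ + 1) := by
    intro p
    by_cases h : Good σ (p : ℕ)
    · rw [if_pos h, des_ins_of_good σ p h]
    · rw [if_neg h, des_ins_of_not_good σ p h]
  rw [Finset.sum_congr rfl (fun p _ => h1 p), Finset.sum_ite, Finset.sum_const,
    Finset.sum_const]
  have hcard : (univ.filter fun p : Fin (n+1) => Good σ (p : ℕ)).card = des σ + 1 := by
    rw [← card_good σ]
    refine Finset.card_bij (fun p _ => (p : ℕ)) ?_ ?_ ?_
    · intro p hp
      simp only [Finset.mem_filter, Finset.mem_univ, true_and] at hp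
      simp only [Finset.mem_filter, Finset.mem_range]
      exact ⟨p.isLt, hp⟩
    · intro p _ q _ h
      exact Fin.ext h
    · intro b hb
      simp only [Finset.mem_filter, Finset.mem_range] at hb
      exact ⟨⟨b, hb.1⟩, by simp [hb.2], rfl⟩
  have hcard2 : (univ.filter fun p : Fin (n+1) => ¬ Good σ (p : ℕ)).card = n - des σ := by
    have := Finset.card_filter_add_card_filter_not
      (s := (univ : Finset (Fin (n+1)))) (p := fun p => Good σ (p : ℕ))
    rw [hcard] at this
    simp only [Finset.card_univ, Fintype.card_fin] at this
    have hd := des_le σ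
    omega
  rw [hcard, hcard2]

lemma ins_bijective :
    Function.Bijective (fun x : Perm (Fin n) × Fin (n+1) => ins x.1 x.2) := by
  rw [Fintype.bijective_iff_injective_and_card]
  constructor
  · rintro ⟨σ, p⟩ ⟨σ', p'⟩ h
    simp only at h
    have hsymm : ∀ (τ : Perm (Fin n)) (q : Fin (n+1)), (ins τ q).symm (Fin.last n) = q := by
      intro τ q
      rw [Equiv.symm_apply_eq, ins_self]
    have hpq : p = p' := by
      rw [← hsymm σ p, ← hsymm σ' p', h]
    subst hpq
    have hσ : σ = σ' := by
      apply Equiv.ext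
      intro j
      have := congrArg (fun τ : Perm (Fin (n+1)) => τ (p.succAbove j)) h
      simp only [ins_succAbove] at this
      exact Fin.castSucc_injective n this
    rw [hσ]
  · simp [Fintype.card_perm, Nat.factorial_succ, mul_comm]

lemma perm_step (F : ℕ → Polynomial ℤ) :
    ∑ τ : Perm (Fin (n+1)), F (des τ)
      = ∑ σ : Perm (Fin n), ((des σ + 1) • F (des σ) + (n - des σ) • F (des σ + 1)) := by
  rw [← Fintype.sum_bijective _ ins_bijective
    (fun x : Perm (Fin n) × Fin (n+1) => F (des (ins x.1 x.2)))
    (fun τ => F (des τ)) (fun x => rfl)]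
  rw [Fintype.sum_prod_type]
  exact Finset.sum_congr rfl fun σ _ => sum_F_des_ins σ F

/-! ### Inversion sequences -/

/-- set of values of an inversion sequence -/
def vals (e : InvSeq n) : Finset ℕ := Finset.univ.image fun i : Fin n => ((e i : ℕ))

lemma dst_eq (e : InvSeq n) : dst e = (vals e).card := rfl

lemma mem_vals_lt {e : InvSeq n} {a : ℕ} (h : a ∈ vals e) : a < n := by
  simp only [vals, Finset.mem_image, Finset.mem_univ, true_and] at h
  obtain ⟨i, rfl⟩ := h
  have h1 : ((e i : ℕ)) < (i : ℕ) + 1 := (e i).isLt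
  have := i.isLt
  omega

lemma dst_le (e : InvSeq n) : dst e ≤ n := by
  rw [dst_eq]
  have : vals e ⊆ range n := fun a ha => Finset.mem_range.2 (mem_vals_lt ha)
  calc (vals e).card ≤ (range n).card := Finset.card_le_card this
    _ = n := Finset.card_range n

/-- append a new last value to an inversion sequence -/
def snocIS (e : InvSeq n) (v : Fin (n+1)) : InvSeq (n+1) :=
  Fin.snoc (α := fun i : Fin (n+1) => Fin ((i : ℕ) + 1)) e v

lemma vals_snoc (e : InvSeq n) (v : Fin (n+1)) :
    vals (snocIS e v) = insert (v : ℕ) (vals e) := by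
  ext a
  simp only [vals, Finset.mem_image, Finset.mem_univ, true_and, Finset.mem_insert]
  constructor
  · rintro ⟨i, rfl⟩
    induction i using Fin.lastCases with
    | last => left; rw [snocIS, Fin.snoc_last]
    | cast j =>
      right
      exact ⟨j, by rw [snocIS, Fin.snoc_castSucc]⟩
  · rintro (rfl | ⟨j, rfl⟩)
    · exact ⟨Fin.last n, by rw [snocIS, Fin.snoc_last]⟩
    · exact ⟨j.castSucc, by rw [snocIS, Fin.snoc_castSucc]⟩

lemma dst_snoc (e : InvSeq n) (v : Fin (n+1)) :
    dst (snocIS e v) = if (v : ℕ) ∈ vals e then dst e else dst e + 1 := by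
  rw [dst_eq, dst_eq, vals_snoc]
  split
  · rw [Finset.insert_eq_self.2 ‹_›]
  · rw [Finset.card_insert_of_notMem ‹_›]

lemma snocIS_bijective :
    Function.Bijective (fun x : InvSeq n × Fin (n+1) => snocIS x.1 x.2) := by
  rw [Function.bijective_iff_has_inverse]
  refine ⟨fun e' => ((fun i => e' i.castSucc, e' (Fin.last n)) : InvSeq n × Fin (n+1)),
    ?_, ?_⟩
  · rintro ⟨e, v⟩
    simp only [Prod.mk.injEq]
    constructor
    · funext i
      simp [snocIS]
    · simp [snocIS]
  · intro e'
    funext i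
    induction i using Fin.lastCases with
    | last => simp [snocIS]
    | cast j => simp [snocIS]

lemma card_filter_val_mem (e : InvSeq n) :
    (univ.filter fun v : Fin (n+1) => (v : ℕ) ∈ vals e).card = dst e := by
  rw [dst_eq]
  refine Finset.card_bij (fun v _ => (v : ℕ)) ?_ ?_ ?_
  · intro v hv
    simp only [Finset.mem_filter, Finset.mem_univ, true_and] at hv
    exact hv
  · intro v _ w _ h
    exact Fin.ext h
  · intro a ha
    have := mem_vals_lt ha
    exact ⟨⟨a, by omega⟩, by simp [ha], rfl⟩

lemma sum_F_dst_snoc (e : InvSeq n) (F : ℕ → Polynomial ℤ) :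
    ∑ v : Fin (n+1), F (dst (snocIS e v))
      = dst e • F (dst e) + (n + 1 - dst e) • F (dst e + 1) := by
  have h1 : ∀ v : Fin (n+1), F (dst (snocIS e v))
      = if (v : ℕ) ∈ vals e then F (dst e) else F (dst e + 1) := by
    intro v
    rw [dst_snoc]
    split <;> rfl
  rw [Finset.sum_congr rfl (fun v _ => h1 v), Finset.sum_ite, Finset.sum_const,
    Finset.sum_const, card_filter_val_mem]
  have hcard2 : (univ.filter fun v : Fin (n+1) => ¬ ((v : ℕ) ∈ vals e)).card
      = n + 1 - dst e := by
    have := Finset.card_filter_add_card_filter_not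
      (s := (univ : Finset (Fin (n+1)))) (p := fun v : Fin (n+1) => (v : ℕ) ∈ vals e)
    rw [card_filter_val_mem] at this
    simp only [Finset.card_univ, Fintype.card_fin] at this
    have := dst_le e
    omega
  rw [hcard2]

lemma invseq_step (F : ℕ → Polynomial ℤ) :
    ∑ e' : InvSeq (n+1), F (dst e')
      = ∑ e : InvSeq n, (dst e • F (dst e) + (n + 1 - dst e) • F (dst e + 1)) := by
  rw [← Fintype.sum_bijective _ snocIS_bijective
    (fun x : InvSeq n × Fin (n+1) => F (dst (snocIS x.1 x.2)))
    (fun e' => F (dst e')) (fun x => rfl)]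
  rw [Fintype.sum_prod_type]
  exact Finset.sum_congr rfl fun e _ => sum_F_dst_snoc e F

lemma key (n : ℕ) (hn : 1 ≤ n) :
    ∀ F : ℕ → Polynomial ℤ,
      ∑ π : Perm (Fin n), F (des π + 1) = ∑ e : InvSeq n, F (dst e) := by
  induction n, hn using Nat.le_induction with
  | base =>
    intro F
    have hperm : ∀ π : Perm (Fin 1), π = 1 := fun π => Equiv.ext fun i => Subsingleton.elim _ _
    have hinv : ∀ e : InvSeq 1, e = fun i => ⟨0, by omega⟩ := by
      intro e
      funext i
      have h1 : ((e i : ℕ)) < (i : ℕ) + 1 := (e i).isLt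
      have h2 : (i : ℕ) < 1 := i.isLt
      have h3 : ((e i : ℕ)) = 0 := by omega
      exact Fin.ext h3
    have huniv1 : (univ : Finset (Perm (Fin 1))) = {1} := by
      ext π
      simp [hperm π]
    have huniv2 : (univ : Finset (InvSeq 1)) = {fun i => ⟨0, by omega⟩} := by
      ext e
      simp [hinv e]
    rw [huniv1, huniv2, Finset.sum_singleton, Finset.sum_singleton]
    have hdes : des (1 : Perm (Fin 1)) = 0 := by decide
    have hdst : dst (fun i : Fin 1 => (⟨0, by omega⟩ : Fin ((i : ℕ) + 1))) = 1 := by decide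
    rw [hdes, hdst]
  | succ n hn ih =>
    intro F
    have step1 : ∑ τ : Perm (Fin (n+1)), F (des τ + 1)
        = ∑ σ : Perm (Fin n), ((des σ + 1) • F (des σ + 1) + (n - des σ) • F (des σ + 1 + 1)) :=
      perm_step (fun d => F (d + 1))
    set G : ℕ → Polynomial ℤ := fun d => d • F d + (n + 1 - d) • F (d + 1) with hG
    have step2 : ∀ σ : Perm (Fin n),
        (des σ + 1) • F (des σ + 1) + (n - des σ) • F (des σ + 1 + 1) = G (des σ + 1) := by
      intro σ
      rw [hG]
      simp only
      congr 2
      omega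
    rw [step1, Finset.sum_congr rfl (fun σ _ => step2 σ), ih G, invseq_step F]

end DumontAux

/-- Dumont: the distinct-entries statistic on inversion sequences is Eulerian. -/
theorem stmt_19 (n : ℕ) (hn : 1 ≤ n) :
    eulerianPoly n = ∑ e : InvSeq n, Polynomial.X ^ dst e := by
  have := DumontAux.key n hn (fun d => Polynomial.X ^ d)
  simpa [eulerianPoly] using this
end
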